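/- arXiv:2009.10480 — 4 statements merged into one kernel-verified Lean document; each statement's English description precedes it below -/
import Mathlib

section
/- Among all sums of N distinct L-th roots of unity (with N odd, 1 ≤ N ≤ L), the maximal absolute value is achieved by (and only by, up to rotation) sums of N consecutive roots of unity, and this maximal absolute value equals sin(πN/L)/sin(π/L). -/
open Finset

namespace RootsAux

noncomputable def E (L : ℕ) (n : ℤ) : ℂ :=
  Complex.exp (((2 * Real.pi * n / L : ℝ) : ℂ) * Complex.I)

lemma E_def' (L : ℕ) (n : ℤ) :
    E L n = Complex.exp ((2 * Real.pi * (n:ℂ) / L) * Complex.I) := by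
  unfold E; congr 1; push_cast; ring

lemma E_congr (L : ℕ) (hL : L ≠ 0) {n n' : ℤ} (h : (n : ZMod L) = (n' : ZMod L)) :
    E L n = E L n' := by
  rw [ZMod.intCast_eq_intCast_iff] at h
  obtain ⟨q, hq⟩ : (L : ℤ) ∣ n - n' := Int.ModEq.dvd h.symm
  have hn : n = n' + L * q := by linarith
  have hLC : (L : ℂ) ≠ 0 := Nat.cast_ne_zero.mpr hL
  rw [hn, E_def', E_def']
  have harg : 2 * Real.pi * ((n' + L * q : ℤ) : ℂ) / L * Complex.I
      = 2 * Real.pi * (n' : ℂ) / L * Complex.I + (q : ℂ) * (2 * Real.pi * Complex.I) := by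
    push_cast
    field_simp
  rw [harg, Complex.exp_add, Complex.exp_int_mul_two_pi_mul_I, mul_one]

lemma F_eq (L : ℕ) (k : ZMod L) :
    Complex.exp (2 * Real.pi * Complex.I * (ZMod.val k : ℂ) / (L : ℂ)) = E L (ZMod.val k) := by
  rw [E_def']
  congr 1
  push_cast
  ring

lemma E_rep (L : ℕ) [NeZero L] (k : ZMod L) (n : ℤ) (h : (n : ZMod L) = k) :
    E L n = E L (ZMod.val k) := by
  apply E_congr L (NeZero.ne L)
  rw [h]
  push_cast
  simp [ZMod.natCast_val, ZMod.cast_id]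

lemma exp_two_sub_one (x : ℝ) :
    Complex.exp (((2*x : ℝ) : ℂ) * Complex.I) - 1
      = Complex.exp (((x : ℝ) : ℂ) * Complex.I) * (2 * (Real.sin x : ℂ) * Complex.I) := by
  rw [Complex.ofReal_sin, Complex.sin]
  have h1 : Complex.exp (-(x:ℂ) * Complex.I) * Complex.exp ((x:ℂ) * Complex.I) = 1 := by
    rw [← Complex.exp_add]; ring_nf; exact Complex.exp_zero
  have h2 : Complex.exp ((x:ℂ) * Complex.I) * Complex.exp ((x:ℂ) * Complex.I)
      = Complex.exp (((2*x:ℝ):ℂ) * Complex.I) := by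
    rw [← Complex.exp_add]; push_cast; ring_nf
  push_cast at h2 ⊢
  linear_combination h1 - h2 + (Complex.exp ((x:ℂ)*Complex.I)*Complex.exp ((x:ℂ)*Complex.I)
    - Complex.exp ((x:ℂ)*Complex.I)*Complex.exp (-(x:ℂ)*Complex.I)) * Complex.I_sq

end RootsAux

namespace RootsAux
open Real

lemma sin_div_pos (L : ℕ) (hL : 2 ≤ L) : 0 < Real.sin (Real.pi / L) := by
  apply Real.sin_pos_of_pos_of_lt_pi
  · positivity
  · have h1 : (1:ℝ) < L := by exact_mod_cast Nat.lt_of_lt_of_le one_lt_two hL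
    rw [div_lt_iff₀ (by linarith)]
    nlinarith [Real.pi_pos]

lemma geo (L N : ℕ) (hL : 2 ≤ L) :
    ∑ j ∈ Finset.range N, E L (j : ℤ)
      = ((Real.sin (Real.pi * N / L) / Real.sin (Real.pi / L) : ℝ) : ℂ)
        * Complex.exp ((((N:ℝ) - 1) * Real.pi / L : ℝ) * Complex.I) := by
  have hL0 : (0:ℝ) < L := by positivity
  have hLne : (L:ℝ) ≠ 0 := ne_of_gt hL0
  have hβ : 0 < Real.pi / L := by positivity
  have hβ2 : Real.pi / L ≤ Real.pi / 2 := by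
    apply div_le_div_of_nonneg_left Real.pi_pos.le (by norm_num) (by exact_mod_cast hL)
  set z := Complex.exp (((2 * (Real.pi / L) : ℝ) : ℂ) * Complex.I) with hzdef
  have hz1 : z ≠ 1 := by
    intro h
    have hre : Real.cos (2 * (Real.pi / L)) = 1 := by
      have := Complex.exp_ofReal_mul_I_re (2 * (Real.pi / L))
      rw [← hzdef, h] at this
      simpa using this.symm
    rw [Real.cos_eq_one_iff_of_lt_of_lt (by nlinarith [Real.pi_pos]) (by nlinarith [Real.pi_pos])] at hre
    nlinarith [Real.pi_pos]
  have hEj : ∀ j : ℕ, E L (j : ℤ) = z ^ j := by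
    intro j
    rw [← Complex.exp_nat_mul]
    unfold E
    congr 1
    push_cast
    field_simp
  have hsum : ∑ j ∈ Finset.range N, E L (j : ℤ) = (z ^ N - 1) / (z - 1) := by
    rw [← geom_sum_eq hz1]
    exact Finset.sum_congr rfl (fun j _ => hEj j)
  have hzN : z ^ N = Complex.exp (((2 * (Real.pi * N / L) : ℝ) : ℂ) * Complex.I) := by
    rw [← Complex.exp_nat_mul]
    congr 1
    push_cast
    ring
  have hnum := exp_two_sub_one (Real.pi * N / L)
  have hden := exp_two_sub_one (Real.pi / L)
  have hs2 : Real.sin (Real.pi / L) ≠ 0 := ne_of_gt (sin_div_pos L hL)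
  rw [hsum, hzN, hnum]
  have hzden : z - 1 = Complex.exp (((Real.pi / L : ℝ) : ℂ) * Complex.I)
      * (2 * (Real.sin (Real.pi / L) : ℂ) * Complex.I) := hden
  rw [hzden]
  have hsplit : Complex.exp (((Real.pi * N / L : ℝ) : ℂ) * Complex.I)
      = Complex.exp ((((N:ℝ) - 1) * Real.pi / L : ℝ) * Complex.I)
        * Complex.exp (((Real.pi / L : ℝ) : ℂ) * Complex.I) := by
    rw [← Complex.exp_add]
    congr 1
    push_cast
    field_simp
    ring
  rw [hsplit]
  have hexne : Complex.exp (((Real.pi / L : ℝ) : ℂ) * Complex.I) ≠ 0 := Complex.exp_ne_zero _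
  have hs2C : ((Real.sin (Real.pi / L) : ℝ) : ℂ) ≠ 0 := by exact_mod_cast hs2
  have hden0 : Complex.exp (((Real.pi / L : ℝ) : ℂ) * Complex.I)
      * (2 * (Real.sin (Real.pi / L) : ℂ) * Complex.I) ≠ 0 := by
    apply mul_ne_zero hexne
    apply mul_ne_zero (mul_ne_zero two_ne_zero hs2C) Complex.I_ne_zero
  rw [div_eq_iff hden0]
  push_cast at hs2C ⊢
  field_simp [hs2C]

end RootsAux

namespace RootsAux

lemma E_add (L : ℕ) (a b : ℤ) : E L (a + b) = E L a * E L b := by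
  rw [E_def', E_def', E_def', ← Complex.exp_add]
  congr 1
  push_cast
  ring

lemma consec_sum (L N : ℕ) (hL : 2 ≤ L) (a : ℤ) :
    ∑ j ∈ Finset.range N, E L (a + j)
      = ((Real.sin (Real.pi * N / L) / Real.sin (Real.pi / L) : ℝ) : ℂ)
        * Complex.exp (((2 * Real.pi * a / L + ((N:ℝ) - 1) * Real.pi / L : ℝ) : ℂ) * Complex.I) := by
  have h1 : ∑ j ∈ Finset.range N, E L (a + j) = E L a * ∑ j ∈ Finset.range N, E L (j : ℤ) := by
    rw [Finset.mul_sum]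
    exact Finset.sum_congr rfl fun j _ => E_add L a j
  rw [h1, geo L N hL]
  unfold E
  rw [mul_left_comm, ← Complex.exp_add]
  congr 2
  push_cast
  ring

lemma D_nonneg (L N : ℕ) (hL : 2 ≤ L) (hNL : N ≤ L) :
    0 ≤ Real.sin (Real.pi * N / L) / Real.sin (Real.pi / L) := by
  apply div_nonneg _ (sin_div_pos L hL).le
  apply Real.sin_nonneg_of_nonneg_of_le_pi
  · positivity
  · have hL0 : (0:ℝ) < L := by positivity
    rw [div_le_iff₀ hL0]
    have : (N:ℝ) ≤ L := by exact_mod_cast hNL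
    nlinarith [Real.pi_pos]

lemma consec_norm (L N : ℕ) (hL : 2 ≤ L) (hNL : N ≤ L) (a : ℤ) :
    ‖∑ j ∈ Finset.range N, E L (a + j)‖
      = Real.sin (Real.pi * N / L) / Real.sin (Real.pi / L) := by
  rw [consec_sum L N hL a, norm_mul, Complex.norm_exp_ofReal_mul_I, mul_one,
    Complex.norm_real, Real.norm_eq_abs, abs_of_nonneg (D_nonneg L N hL hNL)]

lemma g_eq (L : ℕ) [NeZero L] (θ : ℝ) (k : ZMod L) (n : ℤ) (h : (n : ZMod L) = k) :
    (Complex.exp (((-θ : ℝ) : ℂ) * Complex.I)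
        * Complex.exp (2 * Real.pi * Complex.I * (ZMod.val k : ℂ) / (L : ℂ))).re
      = Real.cos (2 * Real.pi * n / L - θ) := by
  rw [F_eq, ← E_rep L k n h]
  unfold E
  rw [← Complex.exp_add]
  have harg : ((-θ:ℝ):ℂ) * Complex.I + ((2 * Real.pi * n / L : ℝ):ℂ) * Complex.I
      = ((2 * Real.pi * n / L - θ : ℝ):ℂ) * Complex.I := by push_cast; ring
  rw [harg, Complex.exp_ofReal_mul_I_re]

lemma cos_outside (b c x : ℝ) (hb : 0 < b) (hc : 0 ≤ c) (hcb : c + b ≤ Real.pi)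
    (h1 : c ≤ |x|) (h2 : |x| ≤ Real.pi + b) : Real.cos x ≤ Real.cos c := by
  rw [← Real.cos_abs x]
  rcases le_or_gt |x| Real.pi with h | h
  · exact Real.cos_le_cos_of_nonneg_of_le_pi hc h h1
  · have key : Real.cos |x| = Real.cos (2 * Real.pi - |x|) := by
      rw [Real.cos_sub]
      simp [Real.cos_two_pi, Real.sin_two_pi]
    rw [key]
    apply Real.cos_le_cos_of_nonneg_of_le_pi hc (by linarith)
    linarith

end RootsAux

namespace RootsAux

lemma map_inj (L N : ℕ) [NeZero L] (hNL : N ≤ L) (a : ZMod L) :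
    Function.Injective (fun j : Fin N => a + ((j : ℕ) : ZMod L)) := by
  intro j j' h
  simp only [add_right_injective] at h
  have h2 : (((j : ℕ) : ZMod L)) = (((j' : ℕ) : ZMod L)) := by
    exact add_left_cancel h
  have := congrArg ZMod.val h2
  rwa [ZMod.val_cast_of_lt (lt_of_lt_of_le j.isLt hNL),
    ZMod.val_cast_of_lt (lt_of_lt_of_le j'.isLt hNL), ← Fin.ext_iff] at this

lemma card_image_consec (L N : ℕ) [NeZero L] (hNL : N ≤ L) (a : ZMod L) :
    (Finset.image (fun j : Fin N => a + ((j : ℕ) : ZMod L)) Finset.univ).card = N := by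
  rw [Finset.card_image_of_injective _ (map_inj L N hNL a), Finset.card_univ, Fintype.card_fin]

lemma mem_image_consec (L N : ℕ) [NeZero L] (hNL : N ≤ L) (a : ZMod L) (k : ZMod L) :
    k ∈ Finset.image (fun j : Fin N => a + ((j : ℕ) : ZMod L)) Finset.univ
      ↔ (k - a).val < N := by
  constructor
  · rintro hk
    obtain ⟨j, -, rfl⟩ := Finset.mem_image.mp hk
    simp only [add_sub_cancel_left]
    rw [ZMod.val_cast_of_lt (lt_of_lt_of_le j.isLt hNL)]
    exact j.isLt
  · intro h
    apply Finset.mem_image.mpr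
    refine ⟨⟨(k - a).val, h⟩, Finset.mem_univ _, ?_⟩
    simp only
    rw [ZMod.natCast_val, ZMod.cast_id]
    ring

lemma sum_image_consec (L N : ℕ) [NeZero L] (hNL : N ≤ L) (a : ZMod L) (f : ZMod L → ℂ) :
    ∑ k ∈ Finset.image (fun j : Fin N => a + ((j : ℕ) : ZMod L)) Finset.univ, f k
      = ∑ j ∈ Finset.range N, f (a + ((j : ℕ) : ZMod L)) := by
  rw [Finset.sum_image (fun x _ y _ h => map_inj L N hNL a h)]
  exact (Fin.sum_univ_eq_sum_range (fun j => f (a + ((j:ℕ) : ZMod L))) N)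

lemma rep_consec (L : ℕ) [NeZero L] (a : ZMod L) (a' : ℤ) (ha : (a' : ZMod L) = a) (j : ℕ) :
    ((a' + j : ℤ) : ZMod L) = a + ((j : ℕ) : ZMod L) := by
  push_cast
  rw [ha]

lemma consec_set_norm (L N : ℕ) [NeZero L] (hL : 2 ≤ L) (hNL : N ≤ L) (a : ZMod L) :
    ‖∑ k ∈ Finset.image (fun j : Fin N => a + ((j : ℕ) : ZMod L)) Finset.univ,
        Complex.exp (2 * Real.pi * Complex.I * (ZMod.val k : ℂ) / (L : ℂ))‖
      = Real.sin (Real.pi * N / L) / Real.sin (Real.pi / L) := by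
  rw [sum_image_consec L N hNL a]
  have hsum : ∑ j ∈ Finset.range N,
      Complex.exp (2 * Real.pi * Complex.I * (ZMod.val (a + ((j:ℕ) : ZMod L)) : ℂ) / (L : ℂ))
      = ∑ j ∈ Finset.range N, E L ((ZMod.val a : ℤ) + j) := by
    apply Finset.sum_congr rfl
    intro j _
    rw [F_eq, ← E_rep L _ ((ZMod.val a : ℤ) + j)]
    apply rep_consec
    have h2 : ((ZMod.val a : ℤ) : ZMod L) = ((ZMod.val a : ℕ) : ZMod L) := by push_cast; rfl
    rw [h2, ZMod.natCast_val, ZMod.cast_id]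
  rw [hsum, consec_norm L N hL hNL]

end RootsAux

namespace RootsAux

set_option maxHeartbeats 1000000 in
lemma main_lt (L N M : ℕ) (hL : 2 ≤ L) (hN : 1 ≤ N) (hNL : N < L) (hM : N = 2 * M + 1)
    (S : Finset (ZMod L)) (hS : S.card = N) :
    ‖∑ k ∈ S, Complex.exp (2 * Real.pi * Complex.I * (ZMod.val k : ℂ) / (L : ℂ))‖
        ≤ Real.sin (Real.pi * N / L) / Real.sin (Real.pi / L)
    ∧ (‖∑ k ∈ S, Complex.exp (2 * Real.pi * Complex.I * (ZMod.val k : ℂ) / (L : ℂ))‖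
        = Real.sin (Real.pi * N / L) / Real.sin (Real.pi / L)
       → ∃ a : ZMod L, S = Finset.image (fun j : Fin N => a + ((j:ℕ) : ZMod L)) Finset.univ) := by
  haveI : NeZero L := ⟨by omega⟩
  set D := Real.sin (Real.pi * N / L) / Real.sin (Real.pi / L) with hD
  set F : ZMod L → ℂ :=
    fun k => Complex.exp (2 * Real.pi * Complex.I * (ZMod.val k : ℂ) / (L : ℂ)) with hF
  set z := ∑ k ∈ S, F k with hz
  set θ := z.arg with hθ
  set m : ℤ := round (θ * L / (2 * Real.pi)) with hm
  have hLpos : (0:ℝ) < L := by positivity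
  have hπ := Real.pi_pos
  set u : ℝ := 2 * Real.pi / L with hu'
  have hu : (0:ℝ) < u := by rw [hu']; positivity
  set θ' : ℝ := θ - 2 * Real.pi * m / L with hθ'
  have hθ'b : |θ'| ≤ u / 2 := by
    have h1 := abs_sub_round (θ * L / (2 * Real.pi))
    have h2 : θ' = (θ * L / (2 * Real.pi) - m) * u := by
      rw [hθ', hu']
      field_simp
    rw [h2, abs_mul, abs_of_pos hu]
    calc |θ * L / (2 * Real.pi) - m| * u ≤ (1/2) * u :=
          mul_le_mul_of_nonneg_right h1 hu.le
      _ = u / 2 := by ring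
  have hθ'le : -(u/2) ≤ θ' ∧ θ' ≤ u/2 := abs_le.mp hθ'b
  have huπ : u ≤ Real.pi := by
    rw [hu', div_le_iff₀ hLpos]
    nlinarith [show (2:ℝ) ≤ (L:ℝ) from by exact_mod_cast hL]
  set a₀ : ℤ := m - M with ha₀
  set a : ZMod L := (a₀ : ZMod L) with ha
  set B := Finset.image (fun j : Fin N => a + ((j:ℕ) : ZMod L)) Finset.univ with hB
  set g : ZMod L → ℝ := fun k => (Complex.exp (((-θ : ℝ):ℂ) * Complex.I) * F k).re with hg
  -- ‖z‖ = ∑ g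
  have hkey : Complex.exp (((-θ : ℝ):ℂ) * Complex.I) * z = ((‖z‖ : ℝ) : ℂ) := by
    conv_lhs => rw [← Complex.norm_mul_exp_arg_mul_I z]
    rw [mul_left_comm, ← Complex.exp_add,
      show ((-θ:ℝ):ℂ) * Complex.I + (z.arg : ℂ) * Complex.I = 0 by
        rw [← hθ]; push_cast; ring,
      Complex.exp_zero, mul_one]
  have hnormz : ‖z‖ = ∑ k ∈ S, g k := by
    have h1 : (Complex.exp (((-θ : ℝ):ℂ) * Complex.I) * z).re = ‖z‖ := by
      rw [hkey, Complex.ofReal_re]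
    rw [← h1, hz, Finset.mul_sum, Complex.re_sum]
  clear_value z θ m u θ' a₀
  -- value of g via integer representatives
  have g_val : ∀ (t : ℤ) (k : ZMod L), ((m + t : ℤ) : ZMod L) = k →
      g k = Real.cos (u * t - θ') := by
    intro t k hrep
    have h1 := g_eq L θ k (m + t) hrep
    rw [hg]
    simp only [hF]
    rw [h1]
    congr 1
    rw [hθ', hu']
    push_cast
    ring
  have hav : ∀ k : ZMod L, ((a₀ + ((k - a).val : ℤ) : ℤ) : ZMod L) = k := by
    intro k
    calc ((a₀ + ((k - a).val : ℤ) : ℤ) : ZMod L) = a + (((k - a).val : ℕ) : ZMod L) :=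
          rep_consec L a a₀ rfl _
      _ = a + (k - a) := by rw [ZMod.natCast_val, ZMod.cast_id]
      _ = k := by ring
  -- representatives for members of B
  have hrepB : ∀ k ∈ B, ∃ t : ℤ, |t| ≤ (M:ℤ) ∧ ((m + t : ℤ) : ZMod L) = k := by
    intro k hk
    rw [hB, mem_image_consec L N hNL.le a] at hk
    refine ⟨((k - a).val : ℤ) - M, ?_, ?_⟩
    · have h1 : (0:ℤ) ≤ ((k-a).val:ℤ) := Int.natCast_nonneg _
      have h2 : ((k-a).val:ℤ) < 2*M + 1 := by exact_mod_cast hM ▸ hk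
      rw [abs_le]; omega
    · rw [show (m:ℤ) + (((k-a).val:ℤ) - M) = a₀ + ((k-a).val:ℤ) by rw [ha₀]; ring]
      exact hav k
  -- representatives for non-members
  have hrepC : ∀ k ∉ B, ∃ t : ℤ,
      (M:ℤ) + 1 ≤ |t| ∧ 2 * |t| ≤ (L:ℤ) ∧ ((m + t : ℤ) : ZMod L) = k := by
    intro k hk
    rw [hB, mem_image_consec L N hNL.le a] at hk
    set v : ℤ := ((k - a).val : ℤ) with hv
    have hv1 : (N:ℤ) ≤ v := by
      rw [hv]
      exact_mod_cast not_lt.mp hk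
    have hv2 : v < (L:ℤ) := by
      rw [hv]
      exact_mod_cast ZMod.val_lt (k - a)
    have hNM : (N:ℤ) = 2*M + 1 := by exact_mod_cast hM
    rcases le_or_gt (2*(v - M)) (L:ℤ) with hcase | hcase
    · refine ⟨v - M, ?_, ?_, ?_⟩
      · rw [abs_of_nonneg (by omega)]; omega
      · rw [abs_of_nonneg (by omega)]; omega
      · rw [show (m:ℤ) + (v - M) = a₀ + v by rw [ha₀]; ring]
        exact hav k
    · refine ⟨v - M - L, ?_, ?_, ?_⟩
      · rw [abs_of_nonpos (by omega)]; omega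
      · rw [abs_of_nonpos (by omega)]; omega
      · have heq2 : ((m + (v - M - L) : ℤ) : ZMod L) = ((a₀ + v : ℤ) : ZMod L) := by
          rw [ha₀]
          push_cast
          rw [ZMod.natCast_self]
          ring
        rw [heq2]
        exact hav k
  have hπbound : u * M + u / 2 ≤ Real.pi := by
    have hNr : (N:ℝ) = 2*M + 1 := by exact_mod_cast hM
    have hNLr : (N:ℝ) ≤ L := by exact_mod_cast hNL.le
    have heq1 : u * M + u / 2 = Real.pi * N / L := by
      rw [hu', hNr]
      field_simp
    rw [heq1, div_le_iff₀ hLpos]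
    nlinarith
  have hπbound2 : u * (M+1) ≤ Real.pi := by
    have hNr : (N:ℝ) = 2*M + 1 := by exact_mod_cast hM
    have hNLr : (N:ℝ) + 1 ≤ L := by exact_mod_cast hNL
    have heq1 : u * ((M:ℝ)+1) = Real.pi * ((N:ℝ)+1) / L := by
      rw [hu', hNr]
      field_simp
      ring
    rw [heq1, div_le_iff₀ hLpos]
    nlinarith
  -- generic bounds
  have hgB : ∀ k ∈ B, Real.cos (u * M + u / 2) ≤ g k := by
    intro k hk
    obtain ⟨t, ht, hrep⟩ := hrepB k hk
    rw [g_val t k hrep, ← Real.cos_abs (u * t - θ')]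
    apply Real.cos_le_cos_of_nonneg_of_le_pi (abs_nonneg _) hπbound
    have htr : |(t:ℝ)| ≤ (M:ℝ) := by exact_mod_cast ht
    obtain ⟨ht1, ht2⟩ := abs_le.mp htr
    rw [abs_le]
    constructor <;> nlinarith [hθ'le.1, hθ'le.2]
  have hgC : ∀ k ∉ B, g k ≤ Real.cos (u * M + u / 2) := by
    intro k hk
    obtain ⟨t, ht1, ht2, hrep⟩ := hrepC k hk
    rw [g_val t k hrep]
    have ht1' : (M:ℝ) + 1 ≤ |(t:ℝ)| := by exact_mod_cast ht1
    have ht2' : 2 * |(t:ℝ)| ≤ (L:ℝ) := by exact_mod_cast ht2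
    apply cos_outside (u/2) (u * M + u / 2) _ (half_pos hu)
      (by nlinarith [mul_nonneg hu.le (show (0:ℝ) ≤ (M:ℝ) from Nat.cast_nonneg M)])
      (by linarith [hπbound]) ?_ ?_
    · -- u*M + u/2 ≤ |u t - θ'|
      have hM0 : (0:ℝ) ≤ u * M := mul_nonneg hu.le (Nat.cast_nonneg M)
      rcases le_or_gt 0 (t:ℝ) with hts | hts
      · rw [abs_of_nonneg hts] at ht1' ht2'
        have hmul : u * ((M:ℝ)+1) ≤ u * t := mul_le_mul_of_nonneg_left ht1' hu.le
        rw [abs_of_nonneg (show (0:ℝ) ≤ u * (t:ℝ) - θ' by nlinarith [hθ'le.2])]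
        nlinarith [hθ'le.2]
      · rw [abs_of_neg hts] at ht1' ht2'
        have hmul : u * ((M:ℝ)+1) ≤ u * (-t) := mul_le_mul_of_nonneg_left ht1' hu.le
        rw [abs_of_nonpos (show u * (t:ℝ) - θ' ≤ 0 by nlinarith [hθ'le.1])]
        nlinarith [hθ'le.1]
    · -- |u t - θ'| ≤ π + u/2
      have hup : u * |(t:ℝ)| ≤ Real.pi := by
        rw [hu', div_mul_eq_mul_div, div_le_iff₀ hLpos]
        nlinarith [mul_le_mul_of_nonneg_left ht2' hπ.le]
      have htri := abs_add_le (u * (t:ℝ)) (-θ')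
      rw [← sub_eq_add_neg, abs_neg] at htri
      rw [abs_mul, abs_of_pos hu] at htri
      linarith [hθ'b]
  -- sum over B
  have hBsum : ∑ k ∈ B, g k = D * Real.cos θ' := by
    have h1 : ∑ k ∈ B, F k = ∑ j ∈ Finset.range N, E L (a₀ + j) := by
      rw [hB, sum_image_consec L N hNL.le a]
      apply Finset.sum_congr rfl
      intro j _
      simp only [hF]
      rw [F_eq, ← E_rep L _ (a₀ + j) (rep_consec L a a₀ rfl j)]
    have h2 : ∑ k ∈ B, g k
        = (Complex.exp (((-θ:ℝ):ℂ) * Complex.I) * ∑ k ∈ B, F k).re := by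
      rw [Finset.mul_sum, Complex.re_sum]
    rw [h2, h1, consec_sum L N hL a₀, mul_left_comm, ← hD, Complex.re_ofReal_mul,
      ← Complex.exp_add,
      show ((-θ:ℝ):ℂ) * Complex.I
          + ((2 * Real.pi * a₀ / L + ((N:ℝ) - 1) * Real.pi / L : ℝ) : ℂ) * Complex.I
        = ((2 * Real.pi * a₀ / L + ((N:ℝ) - 1) * Real.pi / L - θ : ℝ) : ℂ) * Complex.I by
          push_cast; ring,
      Complex.exp_ofReal_mul_I_re]
    congr 1
    rw [show 2 * Real.pi * (a₀:ℝ) / L + ((N:ℝ) - 1) * Real.pi / L - θ = -θ' by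
      rw [hθ', ha₀]
      have hNr : (N:ℝ) = 2*M + 1 := by exact_mod_cast hM
      push_cast [hNr]
      ring]
    exact Real.cos_neg θ'
  have hBcard : B.card = N := by rw [hB]; exact card_image_consec L N hNL.le a
  have hsd : (S \ B).card = (B \ S).card :=
    Finset.card_sdiff_comm (hS.trans hBcard.symm)
  -- main comparison
  have hcomp : ∑ k ∈ S, g k ≤ ∑ k ∈ B, g k := by
    rw [← Finset.sum_inter_add_sum_sdiff S B g, ← Finset.sum_inter_add_sum_sdiff B S g,
      Finset.inter_comm B S]
    have h1 : ∑ k ∈ S \ B, g k ≤ (S \ B).card • Real.cos (u * M + u / 2) :=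
      Finset.sum_le_card_nsmul _ _ _ (fun k hk => hgC k (Finset.mem_sdiff.mp hk).2)
    have h2 : (B \ S).card • Real.cos (u * M + u / 2) ≤ ∑ k ∈ B \ S, g k :=
      Finset.card_nsmul_le_sum _ _ _ (fun k hk => hgB k (Finset.mem_sdiff.mp hk).1)
    rw [← hsd] at h2
    linarith
  have hDpos : 0 < D := by
    rw [hD]
    apply div_pos _ (sin_div_pos L hL)
    apply Real.sin_pos_of_pos_of_lt_pi
    · have : (1:ℝ) ≤ N := by exact_mod_cast hN
      positivity
    · have hNLr : (N:ℝ) < L := by exact_mod_cast hNL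
      rw [div_lt_iff₀ hLpos]
      nlinarith
  have hle : ‖z‖ ≤ D := by
    rw [hnormz]
    calc ∑ k ∈ S, g k ≤ ∑ k ∈ B, g k := hcomp
      _ = D * Real.cos θ' := hBsum
      _ ≤ D * 1 := mul_le_mul_of_nonneg_left (Real.cos_le_one θ') hDpos.le
      _ = D := mul_one D
  refine ⟨hle, ?_⟩
  -- equality case
  intro heq
  have hcos1 : Real.cos θ' = 1 := by
    have h1 : D ≤ D * Real.cos θ' := by
      calc D = ‖z‖ := heq.symm
        _ = ∑ k ∈ S, g k := hnormz
        _ ≤ ∑ k ∈ B, g k := hcomp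
        _ = D * Real.cos θ' := hBsum
    nlinarith [Real.cos_le_one θ']
  have hθ'0 : θ' = 0 := by
    rw [← Real.cos_eq_one_iff_of_lt_of_lt (by nlinarith [hθ'le.1, hu]) (by nlinarith [hθ'le.2, hu])]
    exact hcos1
  -- strict bounds with θ' = 0
  have hgB' : ∀ k ∈ B, Real.cos (u * M) ≤ g k := by
    intro k hk
    obtain ⟨t, ht, hrep⟩ := hrepB k hk
    rw [g_val t k hrep, hθ'0, sub_zero, ← Real.cos_abs (u * t)]
    apply Real.cos_le_cos_of_nonneg_of_le_pi (abs_nonneg _) (by linarith [hπbound, hu])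
    have htr : |(t:ℝ)| ≤ (M:ℝ) := by exact_mod_cast ht
    rw [abs_mul, abs_of_pos hu]
    nlinarith [abs_nonneg (t:ℝ)]
  have hgC' : ∀ k ∉ B, g k ≤ Real.cos (u * (M + 1)) := by
    intro k hk
    obtain ⟨t, ht1, ht2, hrep⟩ := hrepC k hk
    rw [g_val t k hrep, hθ'0, sub_zero, ← Real.cos_abs (u * t)]
    have ht1' : (M:ℝ) + 1 ≤ |(t:ℝ)| := by exact_mod_cast ht1
    have ht2' : 2 * |(t:ℝ)| ≤ (L:ℝ) := by exact_mod_cast ht2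
    apply Real.cos_le_cos_of_nonneg_of_le_pi
      (mul_nonneg hu.le (by positivity : (0:ℝ) ≤ (M:ℝ) + 1)) ?_ ?_
    · rw [abs_mul, abs_of_pos hu, hu', div_mul_eq_mul_div, div_le_iff₀ hLpos]
      nlinarith [mul_le_mul_of_nonneg_left ht2' hπ.le]
    · rw [abs_mul, abs_of_pos hu]
      nlinarith [mul_le_mul_of_nonneg_left ht1' hu.le]
  -- S must equal B
  have hSB : S = B := by
    by_contra hne
    have hne' : (S \ B).Nonempty := by
      rw [← Finset.card_pos]
      rcases Nat.eq_zero_or_pos (S \ B).card with h | h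
      swap
      · exact h
      · exfalso
        apply hne
        apply Finset.eq_of_subset_of_card_le
          (Finset.sdiff_eq_empty_iff_subset.mp (Finset.card_eq_zero.mp h))
        rw [hS, hBcard]
    set n₀ := (S \ B).card with hn₀
    have hn₀pos : 0 < n₀ := Finset.card_pos.mpr hne'
    have hc21 : Real.cos (u * (M + 1)) < Real.cos (u * M) := by
      apply Real.cos_lt_cos_of_nonneg_of_le_pi
        (mul_nonneg hu.le (Nat.cast_nonneg M)) hπbound2
      nlinarith
    have h1 : ∑ k ∈ S \ B, g k ≤ n₀ • Real.cos (u * (M+1)) :=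
      Finset.sum_le_card_nsmul _ _ _ (fun k hk => hgC' k (Finset.mem_sdiff.mp hk).2)
    have h2 : n₀ • Real.cos (u * M) ≤ ∑ k ∈ B \ S, g k := by
      rw [hsd]
      exact Finset.card_nsmul_le_sum _ _ _ (fun k hk => hgB' k (Finset.mem_sdiff.mp hk).1)
    have h3 : (n₀:ℝ) * Real.cos (u * (M+1)) < (n₀:ℝ) * Real.cos (u * M) := by
      apply mul_lt_mul_of_pos_left hc21
      exact_mod_cast hn₀pos
    rw [nsmul_eq_mul] at h1 h2
    have hlt : ∑ k ∈ S, g k < ∑ k ∈ B, g k := by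
      rw [← Finset.sum_inter_add_sum_sdiff S B g, ← Finset.sum_inter_add_sum_sdiff B S g,
        Finset.inter_comm B S]
      linarith
    have : ‖z‖ < D := by
      rw [hnormz]
      calc ∑ k ∈ S, g k < ∑ k ∈ B, g k := hlt
        _ = D * Real.cos θ' := hBsum
        _ = D := by rw [hθ'0, Real.cos_zero, mul_one]
    rw [heq] at this
    exact lt_irrefl D this
  exact ⟨a, hSB⟩

end RootsAux

open RootsAux

/-- Among all sums of `N` distinct `L`-th roots of unity (`N` odd, `1 ≤ N ≤ L`), the
maximal absolute value, namely `sin(πN/L)/sin(π/L)`, is achieved exactly by sums over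
sets of `N` consecutive roots of unity. -/
theorem max_abs_sum_roots (L N : ℕ) (hL : 2 ≤ L) (hN : 1 ≤ N) (hNL : N ≤ L) (hodd : Odd N) :
    (∀ S : Finset (ZMod L), S.card = N →
      ‖∑ k ∈ S, Complex.exp (2 * Real.pi * Complex.I * (ZMod.val k : ℂ) / (L : ℂ))‖
        ≤ Real.sin (Real.pi * N / L) / Real.sin (Real.pi / L))
    ∧ (∀ S : Finset (ZMod L), S.card = N →
      (‖∑ k ∈ S, Complex.exp (2 * Real.pi * Complex.I * (ZMod.val k : ℂ) / (L : ℂ))‖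
          = Real.sin (Real.pi * N / L) / Real.sin (Real.pi / L)
        ↔ ∃ a : ZMod L, S = Finset.image (fun j : Fin N => a + (j : ZMod L)) Finset.univ)) := by
  haveI : NeZero L := ⟨by omega⟩
  obtain ⟨M, hM⟩ := hodd
  rcases eq_or_lt_of_le hNL with hNLeq | hNLlt
  · -- N = L
    subst hNLeq
    have himg : ∀ a : ZMod N,
        Finset.image (fun j : Fin N => a + ((j:ℕ) : ZMod N)) Finset.univ = Finset.univ := by
      intro a
      apply Finset.eq_univ_of_card
      rw [card_image_consec N N le_rfl a, ZMod.card]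
    have hnorm : ∀ S : Finset (ZMod N), S.card = N →
        ‖∑ k ∈ S, Complex.exp (2 * Real.pi * Complex.I * (ZMod.val k : ℂ) / (N : ℂ))‖
          = Real.sin (Real.pi * N / N) / Real.sin (Real.pi / N) := by
      intro S hS
      have hSuniv : S = Finset.univ := Finset.eq_univ_of_card S (by rw [hS, ZMod.card])
      rw [hSuniv, ← himg 0]
      exact consec_set_norm N N hL le_rfl 0
    refine ⟨fun S hS => le_of_eq (hnorm S hS), fun S hS => ?_⟩
    have hSuniv : S = Finset.univ := Finset.eq_univ_of_card S (by rw [hS, ZMod.card])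
    exact ⟨fun _ => ⟨0, hSuniv.trans (himg 0).symm⟩, fun _ => hnorm S hS⟩
  · -- N < L
    refine ⟨fun S hS => (main_lt L N M hL hN hNLlt (by omega) S hS).1, fun S hS => ?_⟩
    constructor
    · exact (main_lt L N M hL hN hNLlt (by omega) S hS).2
    · rintro ⟨a, rfl⟩
      exact consec_set_norm L N hL hNL a
end

section
/- The function A(ξ) = log cos(πξ/2) + C (for any constant C) is, among even functions A : (−1,1) → ℝ that are C² on (−1,1), the unique solution family of the equation obtained by requiring the Vershik–Kerov–Logan–Shepp family Ω(t,x) = √t · Ω(x/√t) to satisfy the Euler–Lagrange equation A''(g'_x)(g''_{xx})(g'_t)² + 2A'(g'_x) g''_{xt} g'_t − g''_{tt} = 0. -/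
open Real Set

lemma half_deriv (ξ : ℝ) : HasDerivAt (fun y : ℝ => π * y / 2) (π / 2) ξ := by
  simpa using ((hasDerivAt_id ξ).const_mul π).div_const 2

lemma logcos_deriv (ξ : ℝ) (hc : Real.cos (π * ξ / 2) ≠ 0) :
    HasDerivAt (fun y => Real.log (Real.cos (π * y / 2))) (-(π / 2) * Real.tan (π * ξ / 2)) ξ := by
  have h1 : HasDerivAt (fun y => Real.cos (π * y / 2))
      (-Real.sin (π * ξ / 2) * (π / 2)) ξ := (Real.hasDerivAt_cos _).comp ξ (half_deriv ξ)
  have h2 := h1.log hc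
  convert h2 using 1
  rw [Real.tan_eq_sin_div_cos]; field_simp

lemma tan_deriv (ξ : ℝ) (hc : Real.cos (π * ξ / 2) ≠ 0) :
    HasDerivAt (fun y => -(π / 2) * Real.tan (π * y / 2))
      (-(π ^ 2 / 4) / Real.cos (π * ξ / 2) ^ 2) ξ := by
  have h1 : HasDerivAt (fun y => Real.tan (π * y / 2))
      (1 / Real.cos (π * ξ / 2) ^ 2 * (π / 2)) ξ :=
    HasDerivAt.comp (h₂ := Real.tan) ξ (Real.hasDerivAt_tan hc) (half_deriv ξ)
  have := h1.const_mul (-(π / 2))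
  refine this.congr_deriv ?_
  ring

lemma const_on_Ioo {F : ℝ → ℝ} (hF : ∀ ξ ∈ Ioo (-1:ℝ) 1, HasDerivAt F 0 ξ)
    {ξ : ℝ} (hξ : ξ ∈ Ioo (-1:ℝ) 1) : F ξ = F 0 := by
  have hconv : Convex ℝ (Ioo (-1:ℝ) 1) := convex_Ioo _ _
  have hdiff : DifferentiableOn ℝ F (Ioo (-1:ℝ) 1) := fun y hy =>
    ((hF y hy).differentiableAt).differentiableWithinAt
  refine hconv.is_const_of_fderivWithin_eq_zero hdiff (fun y hy => ?_) hξ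
    (by constructor <;> norm_num)
  rw [fderivWithin_of_isOpen isOpen_Ioo hy, (hF y hy).hasFDerivAt.fderiv]
  ext; simp

lemma cos_pos_on (ξ : ℝ) (hξ : ξ ∈ Ioo (-1:ℝ) 1) : 0 < Real.cos (π * ξ / 2) := by
  apply Real.cos_pos_of_mem_Ioo
  obtain ⟨h1, h2⟩ := hξ
  constructor <;> [nlinarith [pi_pos]; nlinarith [pi_pos]]


/-- An even `C²` function `A` on `(−1,1)` makes the Vershik–Kerov–Logan–Shepp family
`Ω(t,x) = √t·Ω(x/√t)` (with `Ω'_x = (2/π)arcsin(x/√t)`, `Ω'_t = √(t−x²)/(πt)`, and the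
induced second derivatives) a solution of the Euler–Lagrange equation
`A''(g'_x)·g''_{xx}·(g'_t)² + 2A'(g'_x)·g''_{xt}·g'_t − g''_{tt} = 0`
if and only if `A(ξ) = log cos(πξ/2) + C` for some constant `C`. -/
theorem euler_lagrange_determines_A
    (A : ℝ → ℝ) (hA : ContDiffOn ℝ 2 A (Set.Ioo (-1 : ℝ) 1))
    (heven : ∀ ξ ∈ Set.Ioo (-1 : ℝ) 1, A (-ξ) = A ξ) :
    ((∀ t x : ℝ, 0 < t → |x| < Real.sqrt t →
        deriv (deriv A) ((2 / π) * arcsin (x / Real.sqrt t))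
            * ((2 / π) / Real.sqrt (t - x ^ 2)) * (Real.sqrt (t - x ^ 2) / (π * t)) ^ 2
          + 2 * deriv A ((2 / π) * arcsin (x / Real.sqrt t))
            * (-(x / (π * t * Real.sqrt (t - x ^ 2)))) * (Real.sqrt (t - x ^ 2) / (π * t))
          - (2 * x ^ 2 - t) / (2 * π * t ^ 2 * Real.sqrt (t - x ^ 2)) = 0)
      ↔ ∃ C : ℝ, ∀ ξ ∈ Set.Ioo (-1 : ℝ) 1, A ξ = Real.log (Real.cos (π * ξ / 2)) + C) := by
  have hπ := pi_pos
  constructor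
  · intro hPDE
    -- differentiability facts
    have hA1 : ∀ ξ ∈ Ioo (-1:ℝ) 1, HasDerivAt A (deriv A ξ) ξ := fun ξ hξ =>
      ((hA.differentiableOn (by norm_num)).differentiableAt
        (isOpen_Ioo.mem_nhds hξ)).hasDerivAt
    have hA2 : ContDiffOn ℝ 1 (deriv A) (Ioo (-1:ℝ) 1) :=
      hA.deriv_of_isOpen isOpen_Ioo (by norm_num)
    have hf' : ∀ ξ ∈ Ioo (-1:ℝ) 1, HasDerivAt (deriv A) (deriv (deriv A) ξ) ξ := fun ξ hξ =>
      ((hA2.differentiableOn (by norm_num)).differentiableAt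
        (isOpen_Ioo.mem_nhds hξ)).hasDerivAt
    -- the ODE
    have hODE : ∀ ξ ∈ Ioo (-1:ℝ) 1,
        deriv (deriv A) ξ * Real.cos (π*ξ/2)^2
          = π * deriv A ξ * Real.sin (π*ξ/2) * Real.cos (π*ξ/2)
            + π^2/4 * (2 * Real.sin (π*ξ/2)^2 - 1) := by
      intro ξ hξ
      set s := Real.sin (π*ξ/2) with hs
      set c := Real.cos (π*ξ/2) with hcdef
      have hc : 0 < c := cos_pos_on ξ hξ
      have hsc : s^2 + c^2 = 1 := Real.sin_sq_add_cos_sq _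
      have hs2 : s^2 < 1 := by nlinarith
      have hs1 : |s| < 1 := abs_lt.mpr ⟨by nlinarith, by nlinarith⟩
      have h := hPDE 1 s one_pos (by rwa [Real.sqrt_one])
      have harc : Real.arcsin s = π*ξ/2 :=
        Real.arcsin_sin (by nlinarith [hξ.1]) (by nlinarith [hξ.2])
      have hsq : Real.sqrt (1 - s^2) = c := by
        rw [show (1:ℝ) - s^2 = c^2 by nlinarith]
        exact Real.sqrt_sq hc.le
      simp only [Real.sqrt_one, div_one, one_pow, mul_one] at h
      rw [harc, hsq, show 2/π*(π*ξ/2) = ξ by field_simp] at h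
      field_simp at h
      have hcan : (4*π^3*c^2) * (deriv (deriv A) ξ * c^2)
          = (4*π^3*c^2) * (π * deriv A ξ * s * c + π^2/4*(2*s^2-1)) := by
        linear_combination π^3*c^2 * h
      exact mul_left_cancel₀ (by positivity) hcan
    -- deriv A 0 = 0
    have h0mem : (0:ℝ) ∈ Ioo (-1:ℝ) 1 := by norm_num
    have f0 : deriv A 0 = 0 := by
      have hneg : HasDerivAt (fun y => A (-y)) (deriv A 0 * (-1)) 0 := by
        have h0 : HasDerivAt A (deriv A 0) (-0 : ℝ) := by simpa using hA1 0 h0mem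
        have hn : HasDerivAt (fun y : ℝ => -y) (-1) (0 : ℝ) := hasDerivAt_neg (0 : ℝ)
        exact h0.comp 0 hn
      have heq : (fun y => A (-y)) =ᶠ[nhds (0:ℝ)] A := by
        filter_upwards [isOpen_Ioo.mem_nhds h0mem] with y hy using heven y hy
      have h2 : deriv (fun y => A (-y)) 0 = deriv A 0 := heq.deriv_eq
      rw [hneg.deriv] at h2
      linarith
    -- the combination H
    set H : ℝ → ℝ := fun ξ => deriv A ξ * Real.cos (π*ξ/2)^2
        + (π/2) * (Real.sin (π*ξ/2) * Real.cos (π*ξ/2)) with hHdef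
    have hH0 : ∀ ξ ∈ Ioo (-1:ℝ) 1, HasDerivAt H 0 ξ := by
      intro ξ hξ
      have hcos : HasDerivAt (fun y => Real.cos (π*y/2))
          (-Real.sin (π*ξ/2)*(π/2)) ξ := (Real.hasDerivAt_cos _).comp ξ (half_deriv ξ)
      have hsin : HasDerivAt (fun y => Real.sin (π*y/2))
          (Real.cos (π*ξ/2)*(π/2)) ξ := (Real.hasDerivAt_sin _).comp ξ (half_deriv ξ)
      have hsum := ((hf' ξ hξ).mul (hcos.pow 2)).add ((hsin.mul hcos).const_mul (π/2))
      refine hsum.congr_deriv ?_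
      have hode := hODE ξ hξ
      have hsc : Real.sin (π*ξ/2)^2 + Real.cos (π*ξ/2)^2 = 1 := Real.sin_sq_add_cos_sq _
      simp only [Pi.pow_apply, Nat.cast_ofNat, Nat.reduceSub, pow_one]
      linear_combination hode + π^2/4 * hsc
    have hHc : ∀ ξ ∈ Ioo (-1:ℝ) 1, H ξ = 0 := by
      intro ξ hξ
      rw [const_on_Ioo hH0 hξ]
      simp [hHdef, f0]
    -- solve for deriv A
    have hfval : ∀ ξ ∈ Ioo (-1:ℝ) 1, deriv A ξ = -(π/2) * Real.tan (π*ξ/2) := by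
      intro ξ hξ
      have hc : 0 < Real.cos (π*ξ/2) := cos_pos_on ξ hξ
      have hH := hHc ξ hξ
      simp only [hHdef] at hH
      have h2 : (deriv A ξ * Real.cos (π*ξ/2) + (π/2) * Real.sin (π*ξ/2))
          * Real.cos (π*ξ/2) = 0 := by linear_combination hH
      rcases mul_eq_zero.mp h2 with h3 | h3
      · rw [Real.tan_eq_sin_div_cos]
        field_simp
        linarith
      · exact absurd h3 hc.ne'
    -- integrate
    refine ⟨A 0, fun ξ hξ => ?_⟩
    have hK : ∀ y ∈ Ioo (-1:ℝ) 1,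
        HasDerivAt (fun y => A y - Real.log (Real.cos (π*y/2))) 0 y := by
      intro y hy
      have hc : 0 < Real.cos (π*y/2) := cos_pos_on y hy
      have := (hA1 y hy).sub (logcos_deriv y hc.ne')
      rw [hfval y hy, sub_self] at this
      exact this
    have hconst := const_on_Ioo hK hξ
    norm_num at hconst
    linarith
  · rintro ⟨C, hC⟩ t x ht hx
    have hst : 0 < Real.sqrt t := Real.sqrt_pos.mpr ht
    have hxt : x^2 < t := by
      have h1 : |x|^2 < Real.sqrt t ^2 := by
        apply pow_lt_pow_left₀ hx (abs_nonneg x)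
        norm_num
      rwa [sq_abs, Real.sq_sqrt ht.le] at h1
    have hc0 : 0 < t - x^2 := by linarith
    have hcs : 0 < Real.sqrt (t - x^2) := Real.sqrt_pos.mpr hc0
    have hu : |x / Real.sqrt t| < 1 := by
      rw [abs_div, abs_of_pos hst, div_lt_one hst]; exact hx
    obtain ⟨hu1, hu2⟩ := abs_lt.mp hu
    set u := x / Real.sqrt t with hudef
    set ξ := 2/π * Real.arcsin u with hξdef
    have harc1 : -(π/2) < Real.arcsin u := Real.neg_pi_div_two_lt_arcsin.mpr hu1
    have harc2 : Real.arcsin u < π/2 := Real.arcsin_lt_pi_div_two.mpr hu2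
    have hξmem : ξ ∈ Ioo (-1:ℝ) 1 := by
      constructor
      · rw [hξdef, show 2/π*Real.arcsin u = 2*Real.arcsin u/π by ring, lt_div_iff₀ hπ]
        linarith
      · rw [hξdef, show 2/π*Real.arcsin u = 2*Real.arcsin u/π by ring, div_lt_iff₀ hπ]
        linarith
    have hhalf : π*ξ/2 = Real.arcsin u := by
      rw [hξdef]; field_simp
    have hsin : Real.sin (π*ξ/2) = u := by
      rw [hhalf, Real.sin_arcsin hu1.le hu2.le]
    have hcpos : 0 < Real.cos (π*ξ/2) := cos_pos_on ξ hξmem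
    have hcos : Real.cos (π*ξ/2) = Real.sqrt (t - x^2) / Real.sqrt t := by
      have h1 : Real.cos (π*ξ/2)^2 = 1 - u^2 := by
        nlinarith [Real.sin_sq_add_cos_sq (π*ξ/2), hsin]
      have h2 : (Real.sqrt (t-x^2)/Real.sqrt t)^2 = 1 - u^2 := by
        rw [div_pow, Real.sq_sqrt hc0.le, Real.sq_sqrt ht.le, hudef, div_pow,
          Real.sq_sqrt ht.le]
        field_simp
      rw [← Real.sqrt_sq hcpos.le, h1, ← h2,
        Real.sqrt_sq (by positivity)]
    have hFeq : A =ᶠ[nhds ξ] (fun y => Real.log (Real.cos (π*y/2)) + C) := by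
      filter_upwards [isOpen_Ioo.mem_nhds hξmem] with y hy using hC y hy
    have hd1 : deriv A ξ = -(π/2) * Real.tan (π*ξ/2) := by
      rw [hFeq.deriv_eq]
      exact ((logcos_deriv ξ hcpos.ne').add_const C).deriv
    have hd2 : deriv (deriv A) ξ = -(π^2/4) / Real.cos (π*ξ/2)^2 := by
      have hev2 : deriv A =ᶠ[nhds ξ] (fun y => -(π/2) * Real.tan (π*y/2)) := by
        filter_upwards [isOpen_Ioo.mem_nhds hξmem] with y hy
        have hFeqy : A =ᶠ[nhds y] (fun z => Real.log (Real.cos (π*z/2)) + C) := by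
          filter_upwards [isOpen_Ioo.mem_nhds hy] with z hz using hC z hz
        rw [hFeqy.deriv_eq]
        exact ((logcos_deriv y (cos_pos_on y hy).ne').add_const C).deriv
      rw [hev2.deriv_eq]
      exact (tan_deriv ξ hcpos.ne').deriv
    show deriv (deriv A) ξ * _ * _ + 2 * deriv A ξ * _ * _ - _ = 0
    rw [hd1, hd2, Real.tan_eq_sin_div_cos, hsin, hcos, hudef]
    rw [div_pow, div_pow, Real.sq_sqrt hc0.le, Real.sq_sqrt ht.le]
    field_simp
    ring
end

section
/- Let T be the transition matrix of an irreducible topological Markov chain on a finite state space, with spectral radius ρ and strictly positive right eigenvector u (Tu = ρu) and left eigenvector v (v^T T = ρ v^T), normalized so that Σ_s u_s v_s = 1. Then the Markov measure with stationary distribution π_s = u_s v_s and transition probabilities p_{s→s'} = T_{s,s'} u_{s'}/(ρ u_s) is a stationary probability measure whose entropy equals log ρ. -/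
open Finset

/-- Parry measure: for an irreducible 0-1 transition matrix `T` with spectral radius `ρ`,
positive right eigenvector `u` (`Tu = ρu`) and left eigenvector `v` (`vᵀT = ρvᵀ`)
normalized by `Σ u_s v_s = 1`, the Markov measure with stationary distribution
`π_s = u_s v_s` and transition probabilities `p_{s→s'} = T_{s,s'} u_{s'}/(ρ u_s)` is a
stationary probability measure whose entropy equals `log ρ`. -/
theorem parry_measure_entropy
    (S : Type*) [Fintype S] [Nonempty S] [DecidableEq S]
    (T : Matrix S S ℝ) (h01 : ∀ s s', T s s' = 0 ∨ T s s' = 1)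
    (ρ : ℝ) (hρ : 0 < ρ) (u v : S → ℝ)
    (hu0 : ∀ s, 0 < u s) (hv0 : ∀ s, 0 < v s)
    (hu : T.mulVec u = ρ • u) (hv : T.vecMul v = ρ • v)
    (hnorm : ∑ s, u s * v s = 1) :
    (∀ s, ∑ s', T s s' * u s' / (ρ * u s) = 1)
    ∧ (∀ s' : S, ∑ s, (u s * v s) * (T s s' * u s' / (ρ * u s)) = u s' * v s')
    ∧ (-∑ s, (u s * v s) *
          ∑ s', (T s s' * u s' / (ρ * u s)) * Real.log (T s s' * u s' / (ρ * u s)))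
        = Real.log ρ := by
  have hρ' : ρ ≠ 0 := hρ.ne'
  have hrow : ∀ s, ∑ s', T s s' * u s' = ρ * u s := by
    intro s
    have := congrFun hu s
    simpa [Matrix.mulVec, dotProduct] using this
  have hcol : ∀ s', ∑ s, v s * T s s' = ρ * v s' := by
    intro s'
    have := congrFun hv s'
    simpa [Matrix.vecMul, dotProduct] using this
  refine ⟨?_, ?_, ?_⟩
  · intro s
    rw [← Finset.sum_div, hrow]
    exact div_self (mul_ne_zero hρ' (hu0 s).ne')
  · intro s'
    have h1 : ∀ s, (u s * v s) * (T s s' * u s' / (ρ * u s)) = (v s * T s s') * (u s' / ρ) := by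
      intro s
      have hus : u s ≠ 0 := (hu0 s).ne'
      field_simp
    rw [Finset.sum_congr rfl (fun s _ => h1 s), ← Finset.sum_mul, hcol]
    field_simp
  · have key : ∀ s s', (u s * v s) * ((T s s' * u s' / (ρ * u s)) * Real.log (T s s' * u s' / (ρ * u s)))
        = (v s * T s s' * u s' * Real.log (u s'))/ρ
          - (v s * T s s' * u s' * Real.log ρ)/ρ
          - (v s * T s s' * u s' * Real.log (u s))/ρ := by
      intro s s'
      rcases h01 s s' with h | h
      · simp [h]
      · rw [h, one_mul]
        have hlog : Real.log (u s' / (ρ * u s)) = Real.log (u s') - Real.log ρ - Real.log (u s) := by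
          rw [Real.log_div (hu0 s').ne' (mul_ne_zero hρ' (hu0 s).ne'), Real.log_mul hρ' (hu0 s).ne']
          ring
        rw [hlog]
        have hus : u s ≠ 0 := (hu0 s).ne'
        field_simp
    have step : (∑ s, (u s * v s) *
          ∑ s', (T s s' * u s' / (ρ * u s)) * Real.log (T s s' * u s' / (ρ * u s)))
        = (∑ s, ∑ s', (v s * T s s' * u s' * Real.log (u s'))/ρ)
          - (∑ s, ∑ s', (v s * T s s' * u s' * Real.log ρ)/ρ)
          - (∑ s, ∑ s', (v s * T s s' * u s' * Real.log (u s))/ρ) := by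
      rw [← Finset.sum_sub_distrib, ← Finset.sum_sub_distrib]
      refine Finset.sum_congr rfl fun s _ => ?_
      rw [Finset.mul_sum, ← Finset.sum_sub_distrib, ← Finset.sum_sub_distrib]
      exact Finset.sum_congr rfl fun s' _ => key s s'
    have S1 : (∑ s, ∑ s', (v s * T s s' * u s' * Real.log (u s'))/ρ)
        = ∑ x, u x * v x * Real.log (u x) := by
      rw [Finset.sum_comm]
      refine Finset.sum_congr rfl fun s' _ => ?_
      have h2 : ∀ s, (v s * T s s' * u s' * Real.log (u s'))/ρ
          = (v s * T s s') * (u s' * Real.log (u s')/ρ) := fun s => by ring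
      rw [Finset.sum_congr rfl (fun s _ => h2 s), ← Finset.sum_mul, hcol]
      field_simp
    have S2 : (∑ s, ∑ s', (v s * T s s' * u s' * Real.log ρ)/ρ) = Real.log ρ := by
      have e : ∀ s, ∑ s', (v s * T s s' * u s' * Real.log ρ)/ρ = u s * v s * Real.log ρ := by
        intro s
        have h3 : ∀ s', (v s * T s s' * u s' * Real.log ρ)/ρ
            = (v s * Real.log ρ/ρ) * (T s s' * u s') := fun s' => by ring
        rw [Finset.sum_congr rfl (fun s' _ => h3 s'), ← Finset.mul_sum, hrow]
        field_simp
      rw [Finset.sum_congr rfl (fun s _ => e s), ← Finset.sum_mul, hnorm, one_mul]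
    have S3 : (∑ s, ∑ s', (v s * T s s' * u s' * Real.log (u s))/ρ)
        = ∑ x, u x * v x * Real.log (u x) := by
      refine Finset.sum_congr rfl fun s _ => ?_
      have h4 : ∀ s', (v s * T s s' * u s' * Real.log (u s))/ρ
          = (v s * Real.log (u s)/ρ) * (T s s' * u s') := fun s' => by ring
      rw [Finset.sum_congr rfl (fun s' _ => h4 s'), ← Finset.mul_sum, hrow]
      field_simp
    rw [step, S1, S2, S3]
    ring
end

section
/- For every n ≥ 1, the sum over all Young diagrams λ of size n of (dim λ)², where dim λ is the number of standard Young tableaux of shape λ, equals n!. -/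
open Finset

open scoped Classical in
/-- The number of standard Young tableaux of shape `μ`: bijective, entrywise-monotone
labelings of the cells of `μ` by `{0,…,|μ|−1}` (monotonicity in the product order on
cells together with bijectivity is equivalent to strict increase along rows and
columns). -/
noncomputable def sytCard (μ : YoungDiagram) : ℕ :=
  Fintype.card {f : μ.cells → Fin μ.card //
    Function.Bijective f ∧ ∀ c₁ c₂ : μ.cells,
      (c₁ : ℕ × ℕ).1 ≤ (c₂ : ℕ × ℕ).1 → (c₁ : ℕ × ℕ).2 ≤ (c₂ : ℕ × ℕ).2 → f c₁ ≤ f c₂}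

open scoped Classical

namespace SYTAux

/-- Removable corners. -/
noncomputable def rem (μ : YoungDiagram) : Finset (ℕ × ℕ) :=
  μ.cells.filter fun b => (b.1 + 1, b.2) ∉ μ ∧ (b.1, b.2 + 1) ∉ μ

/-- Addable corners. -/
noncomputable def add (ν : YoungDiagram) : Finset (ℕ × ℕ) :=
  ((range (ν.card + 1)) ×ˢ (range (ν.card + 1))).filter fun c =>
    c ∉ ν ∧ IsLowerSet (↑(insert c ν.cells) : Set (ℕ × ℕ))

noncomputable def eraseCell (μ : YoungDiagram) (b : ℕ × ℕ) : YoungDiagram :=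
  if h : IsLowerSet (↑(μ.cells.erase b) : Set (ℕ × ℕ)) then ⟨μ.cells.erase b, h⟩ else ⊥

noncomputable def addCell (ν : YoungDiagram) (c : ℕ × ℕ) : YoungDiagram :=
  if h : IsLowerSet (↑(insert c ν.cells) : Set (ℕ × ℕ)) then ⟨insert c ν.cells, h⟩ else ⊥

lemma mem_rem {μ : YoungDiagram} {b : ℕ × ℕ} :
    b ∈ rem μ ↔ b ∈ μ ∧ (b.1 + 1, b.2) ∉ μ ∧ (b.1, b.2 + 1) ∉ μ := by
  simp [rem, YoungDiagram.mem_cells]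

lemma rem_lowerSet {μ : YoungDiagram} {b : ℕ × ℕ} (hb : b ∈ rem μ) :
    IsLowerSet (↑(μ.cells.erase b) : Set (ℕ × ℕ)) := by
  rw [mem_rem] at hb
  obtain ⟨hbμ, h1, h2⟩ := hb
  intro y x hxy hy
  simp only [Finset.coe_erase, Set.mem_diff, Set.mem_singleton_iff, Finset.mem_coe,
    YoungDiagram.mem_cells] at hy ⊢
  obtain ⟨hyμ, hyb⟩ := hy
  have hxμ : x ∈ μ := μ.isLowerSet hxy hyμ
  refine ⟨hxμ, ?_⟩
  rintro rfl
  -- x = b ≤ y, y ≠ b, y ∈ μ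
  rcases lt_or_eq_of_le hxy.1 with h | h
  · exact h1 (μ.up_left_mem h hxy.2 hyμ)
  · rcases lt_or_eq_of_le hxy.2 with h' | h'
    · exact h2 (μ.up_left_mem hxy.1 h' hyμ)
    · exact hyb (by cases x; cases y; simp_all)

lemma eraseCell_cells {μ : YoungDiagram} {b : ℕ × ℕ} (hb : b ∈ rem μ) :
    (eraseCell μ b).cells = μ.cells.erase b := by
  rw [eraseCell, dif_pos (rem_lowerSet hb)]

lemma addCell_cells {ν : YoungDiagram} {c : ℕ × ℕ}
    (h : IsLowerSet (↑(insert c ν.cells) : Set (ℕ × ℕ))) :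
    (addCell ν c).cells = insert c ν.cells := by
  rw [addCell, dif_pos h]

lemma mem_add {ν : YoungDiagram} {c : ℕ × ℕ} :
    c ∈ add ν ↔ c ∉ ν ∧ IsLowerSet (↑(insert c ν.cells) : Set (ℕ × ℕ)) := by
  constructor
  · intro h; exact (Finset.mem_filter.mp h).2
  · rintro ⟨hc, hl⟩
    refine Finset.mem_filter.mpr ⟨?_, hc, hl⟩
    -- bounds
    have hb1 : c.1 ≤ ν.card := by
      rcases Nat.eq_zero_or_pos c.1 with h0 | h0
      · omega
      · have : (range c.1).image (fun i => (i, c.2)) ⊆ ν.cells := by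
          intro x hx
          simp only [Finset.mem_image, Finset.mem_range] at hx
          obtain ⟨i, hi, rfl⟩ := hx
          have : (i, c.2) ∈ (↑(insert c ν.cells) : Set (ℕ × ℕ)) :=
            hl (show (i, c.2) ≤ c from ⟨hi.le, le_rfl⟩) (by simp)
          simp only [Finset.coe_insert, Set.mem_insert_iff, Finset.mem_coe] at this
          rcases this with h | h
          · exfalso; have := congrArg Prod.fst h; simp at this; omega
          · exact h
        have := Finset.card_le_card this
        rwa [Finset.card_image_of_injective _ (fun a b hab => by simpa using congrArg Prod.fst hab),
          Finset.card_range] at this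
    have hb2 : c.2 ≤ ν.card := by
      rcases Nat.eq_zero_or_pos c.2 with h0 | h0
      · omega
      · have : (range c.2).image (fun j => (c.1, j)) ⊆ ν.cells := by
          intro x hx
          simp only [Finset.mem_image, Finset.mem_range] at hx
          obtain ⟨j, hj, rfl⟩ := hx
          have : (c.1, j) ∈ (↑(insert c ν.cells) : Set (ℕ × ℕ)) :=
            hl (show (c.1, j) ≤ c from ⟨le_rfl, hj.le⟩) (by simp)
          simp only [Finset.coe_insert, Set.mem_insert_iff, Finset.mem_coe] at this
          rcases this with h | h
          · exfalso; have := congrArg Prod.snd h; simp at this; omega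
          · exact h
        have := Finset.card_le_card this
        rwa [Finset.card_image_of_injective _ (fun a b hab => by simpa using congrArg Prod.snd hab),
          Finset.card_range] at this
    simp only [Finset.mem_product, Finset.mem_range]
    omega


lemma ne_bot_of_mem {μ : YoungDiagram} {x : ℕ × ℕ} (h : x ∈ μ) : μ ≠ ⊥ := by
  intro hb; rw [hb] at h; exact YoungDiagram.notMem_bot x h

lemma mem_of_mem_rem {μ : YoungDiagram} {b : ℕ × ℕ} (h : b ∈ rem μ) : b ∈ μ := (mem_rem.mp h).1

lemma not_mem_of_mem_add {ν : YoungDiagram} {c : ℕ × ℕ} (h : c ∈ add ν) : c ∉ ν := (mem_add.mp h).1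

lemma addCell_cells' {ν : YoungDiagram} {c : ℕ × ℕ} (hc : c ∈ add ν) :
    (addCell ν c).cells = insert c ν.cells := addCell_cells (mem_add.mp hc).2

lemma mem_addCell {ν : YoungDiagram} {c : ℕ × ℕ} (hc : c ∈ add ν) {x : ℕ × ℕ} :
    x ∈ addCell ν c ↔ x = c ∨ x ∈ ν := by
  rw [← YoungDiagram.mem_cells, addCell_cells' hc, Finset.mem_insert, YoungDiagram.mem_cells]

lemma mem_eraseCell {μ : YoungDiagram} {b : ℕ × ℕ} (hb : b ∈ rem μ) {x : ℕ × ℕ} :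
    x ∈ eraseCell μ b ↔ x ≠ b ∧ x ∈ μ := by
  rw [← YoungDiagram.mem_cells, eraseCell_cells hb, Finset.mem_erase, YoungDiagram.mem_cells]

lemma card_eraseCell {μ : YoungDiagram} {b : ℕ × ℕ} (hb : b ∈ rem μ) :
    (eraseCell μ b).card + 1 = μ.card := by
  have : (eraseCell μ b).cells = μ.cells.erase b := eraseCell_cells hb
  rw [YoungDiagram.card, YoungDiagram.card, this,
    Finset.card_erase_of_mem (by rw [YoungDiagram.mem_cells]; exact mem_of_mem_rem hb)]
  have : 0 < μ.cells.card := Finset.card_pos.mpr ⟨b, by rw [YoungDiagram.mem_cells]; exact mem_of_mem_rem hb⟩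
  omega

lemma card_addCell {ν : YoungDiagram} {c : ℕ × ℕ} (hc : c ∈ add ν) :
    (addCell ν c).card = ν.card + 1 := by
  rw [YoungDiagram.card, YoungDiagram.card, addCell_cells' hc,
    Finset.card_insert_of_notMem (by rw [YoungDiagram.mem_cells]; exact not_mem_of_mem_add hc)]

lemma rem_addCell {ν : YoungDiagram} {c : ℕ × ℕ} (hc : c ∈ add ν) :
    c ∈ rem (addCell ν c) := by
  rw [mem_rem]
  refine ⟨(mem_addCell hc).mpr (Or.inl rfl), ?_, ?_⟩
  · rw [mem_addCell hc]
    rintro (h | h)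
    · exact absurd (congrArg Prod.fst h) (by simp)
    · exact not_mem_of_mem_add hc (ν.up_left_mem (by simp) le_rfl h)
  · rw [mem_addCell hc]
    rintro (h | h)
    · exact absurd (congrArg Prod.snd h) (by simp)
    · exact not_mem_of_mem_add hc (ν.up_left_mem le_rfl (by simp) h)

lemma add_eraseCell {μ : YoungDiagram} {b : ℕ × ℕ} (hb : b ∈ rem μ) :
    b ∈ add (eraseCell μ b) := by
  rw [mem_add]
  constructor
  · rw [mem_eraseCell hb]; simp
  · rw [eraseCell_cells hb,
      Finset.insert_erase (by rw [YoungDiagram.mem_cells]; exact mem_of_mem_rem hb)]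
    exact μ.isLowerSet

lemma addCell_eraseCell {μ : YoungDiagram} {b : ℕ × ℕ} (hb : b ∈ rem μ) :
    addCell (eraseCell μ b) b = μ := by
  have h := (mem_add.mp (add_eraseCell hb)).2
  apply YoungDiagram.ext    -- maybe called differently
  rw [addCell_cells h, eraseCell_cells hb,
    Finset.insert_erase (by rw [YoungDiagram.mem_cells]; exact mem_of_mem_rem hb)]

lemma eraseCell_addCell {ν : YoungDiagram} {c : ℕ × ℕ} (hc : c ∈ add ν) :
    eraseCell (addCell ν c) c = ν := by
  apply YoungDiagram.ext
  rw [eraseCell_cells (rem_addCell hc), addCell_cells' hc,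
    Finset.erase_insert (by rw [YoungDiagram.mem_cells]; exact not_mem_of_mem_add hc)]

lemma swap_mem1 {ν : YoungDiagram} {c b : ℕ × ℕ} (hc : c ∈ add ν)
    (hb : b ∈ rem (addCell ν c)) (hne : b ≠ c) :
    b ∈ rem ν ∧ c ∈ add (eraseCell ν b) ∧
      eraseCell (addCell ν c) b = addCell (eraseCell ν b) c := by
  obtain ⟨hbm, h1, h2⟩ := mem_rem.mp hb
  have hbν : b ∈ ν := by
    rcases (mem_addCell hc).mp hbm with h | h
    · exact absurd h hne
    · exact h
  have hbrem : b ∈ rem ν := by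
    rw [mem_rem]
    exact ⟨hbν, fun h => h1 ((mem_addCell hc).mpr (Or.inr h)),
      fun h => h2 ((mem_addCell hc).mpr (Or.inr h))⟩
  have hsets : (insert c (ν.cells.erase b)) = ((addCell ν c).cells.erase b) := by
    rw [addCell_cells' hc, Finset.erase_insert_of_ne hne.symm]
  have hcadd : c ∈ add (eraseCell ν b) := by
    rw [mem_add]
    constructor
    · rw [mem_eraseCell hbrem]
      rintro ⟨-, h⟩; exact not_mem_of_mem_add hc h
    · rw [eraseCell_cells hbrem, hsets]
      exact rem_lowerSet hb
  refine ⟨hbrem, hcadd, ?_⟩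
  apply YoungDiagram.ext
  rw [eraseCell_cells hb, addCell_cells' hcadd, eraseCell_cells hbrem, hsets]

lemma swap_mem2 {ν : YoungDiagram} {b c : ℕ × ℕ} (hb : b ∈ rem ν)
    (hc : c ∈ add (eraseCell ν b)) (hne : c ≠ b) :
    c ∈ add ν ∧ b ∈ rem (addCell ν c) := by
  have hcν : c ∉ ν := by
    have := not_mem_of_mem_add hc
    rw [mem_eraseCell hb] at this
    intro h; exact this ⟨hne, h⟩
  have hlow : IsLowerSet (↑(insert c (ν.cells.erase b)) : Set (ℕ × ℕ)) := by
    have := (mem_add.mp hc).2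
    rwa [eraseCell_cells hb] at this
  -- c is not a neighbor of b
  have hnb1 : c ≠ (b.1 + 1, b.2) := by
    intro h
    have : b ∈ (↑(insert c (ν.cells.erase b)) : Set (ℕ × ℕ)) := by
      apply hlow (b := b) (a := c)
      · rw [h]; exact ⟨by simp, le_rfl⟩
      · simp
    simp only [Finset.coe_insert, Set.mem_insert_iff, Finset.mem_coe, Finset.mem_erase] at this
    rcases this with h' | h'
    · exact hne h'.symm
    · exact h'.1 rfl
  have hnb2 : c ≠ (b.1, b.2 + 1) := by
    intro h
    have : b ∈ (↑(insert c (ν.cells.erase b)) : Set (ℕ × ℕ)) := by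
      apply hlow (b := b) (a := c)
      · rw [h]; exact ⟨le_rfl, by simp⟩
      · simp
    simp only [Finset.coe_insert, Set.mem_insert_iff, Finset.mem_coe, Finset.mem_erase] at this
    rcases this with h' | h'
    · exact hne h'.symm
    · exact h'.1 rfl
  have hlow2 : IsLowerSet (↑(insert c ν.cells) : Set (ℕ × ℕ)) := by
    intro y x hxy hy
    simp only [Finset.coe_insert, Set.mem_insert_iff, Finset.mem_coe,
      YoungDiagram.mem_cells] at hy ⊢
    rcases hy with rfl | hy
    · -- y = c : use hlow
      have := hlow hxy (by simp : y ∈ (↑(insert y (ν.cells.erase b)) : Set (ℕ × ℕ)))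
      simp only [Finset.coe_insert, Set.mem_insert_iff, Finset.mem_coe,
        Finset.mem_erase, YoungDiagram.mem_cells] at this
      rcases this with h | h
      · exact Or.inl h
      · exact Or.inr h.2
    · exact Or.inr (ν.isLowerSet hxy hy)
  have hcadd : c ∈ add ν := mem_add.mpr ⟨hcν, hlow2⟩
  refine ⟨hcadd, ?_⟩
  rw [mem_rem]
  obtain ⟨hbν, h1, h2⟩ := mem_rem.mp hb
  refine ⟨(mem_addCell hcadd).mpr (Or.inr hbν), ?_, ?_⟩
  · rw [mem_addCell hcadd]
    rintro (h | h)
    · exact hnb1 h.symm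
    · exact h1 h
  · rw [mem_addCell hcadd]
    rintro (h | h)
    · exact hnb2 h.symm
    · exact h2 h


noncomputable def d (mu : YoungDiagram) : Nat :=
  if h : mu = ⊥ then 1 else
    ∑ b ∈ (rem mu).attach, d (eraseCell mu b.1)
termination_by mu.card
decreasing_by
  have := card_eraseCell b.2
  omega

lemma d_bot : d ⊥ = 1 := by rw [d, dif_pos rfl]

lemma d_eq {mu : YoungDiagram} (h : mu ≠ ⊥) :
    d mu = ∑ b ∈ rem mu, d (eraseCell mu b) := by
  rw [d, dif_neg h]
  exact Finset.sum_attach (rem mu) (fun b => d (eraseCell mu b))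

lemma colLen_le_card (nu : YoungDiagram) : nu.colLen 0 ≤ nu.card :=
  le_trans (le_of_eq (nu.colLen_eq_card)) (Finset.card_le_card (Finset.filter_subset _ _))

lemma row_bound {nu : YoungDiagram} {i : Nat} (h : 0 < nu.rowLen i) : i < nu.card + 1 := by
  have h0 : (i, 0) ∈ nu := YoungDiagram.mem_iff_lt_rowLen.mpr h
  have := YoungDiagram.mem_iff_lt_colLen.mp h0
  have := colLen_le_card nu
  omega

noncomputable def remRows (nu : YoungDiagram) : Finset Nat :=
  (range (nu.card + 1)).filter fun i => nu.rowLen (i + 1) < nu.rowLen i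

noncomputable def addRows (nu : YoungDiagram) : Finset Nat :=
  (range (nu.card + 2)).filter fun i => i = 0 ∨ nu.rowLen i < nu.rowLen (i - 1)

lemma rem_eq_image (nu : YoungDiagram) :
    rem nu = (remRows nu).image (fun i => (i, nu.rowLen i - 1)) := by
  ext c
  obtain ⟨i, j⟩ := c
  simp only [mem_rem, YoungDiagram.mem_iff_lt_rowLen, Finset.mem_image, remRows,
    Finset.mem_filter, Finset.mem_range, Prod.mk.injEq, not_lt]
  constructor
  · rintro ⟨h1, h2, h3⟩
    have hb := row_bound (nu := nu) (i := i) (by omega)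
    exact ⟨i, ⟨by omega, by omega⟩, rfl, by omega⟩
  · rintro ⟨i', ⟨hi', hlt⟩, rfl, rfl⟩
    have := nu.rowLen_anti i' (i' + 1) (by omega)
    omega

lemma mem_add_iff_rowLen {nu : YoungDiagram} {i j : Nat} :
    (i, j) ∈ add nu ↔ j = nu.rowLen i ∧ (i = 0 ∨ nu.rowLen i < nu.rowLen (i - 1)) := by
  rw [mem_add]
  constructor
  · rintro ⟨hc, hl⟩
    rw [YoungDiagram.mem_iff_lt_rowLen, not_lt] at hc
    have hj : j = nu.rowLen i := by
      by_contra hne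
      have : (i, nu.rowLen i) ∈ (↑(insert (i, j) nu.cells) : Set (Nat × Nat)) :=
        hl (show ((i : Nat), nu.rowLen i) ≤ (i, j) from ⟨le_rfl, by omega⟩) (by simp)
      simp only [Finset.coe_insert, Set.mem_insert_iff, Finset.mem_coe,
        YoungDiagram.mem_cells, Prod.mk.injEq, YoungDiagram.mem_iff_lt_rowLen] at this
      omega
    subst hj
    refine ⟨rfl, ?_⟩
    rcases Nat.eq_zero_or_pos i with h0 | h0
    · exact Or.inl h0
    · right
      have : (i - 1, nu.rowLen i) ∈ (↑(insert (i, nu.rowLen i) nu.cells) : Set (Nat × Nat)) :=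
        hl (show ((i - 1 : Nat), nu.rowLen i) ≤ (i, nu.rowLen i) from ⟨by omega, le_rfl⟩) (by simp)
      simp only [Finset.coe_insert, Set.mem_insert_iff, Finset.mem_coe,
        YoungDiagram.mem_cells, Prod.mk.injEq, YoungDiagram.mem_iff_lt_rowLen] at this
      rcases this with ⟨h, -⟩ | h
      · omega
      · exact h
  · rintro ⟨rfl, hcond⟩
    constructor
    · rw [YoungDiagram.mem_iff_lt_rowLen]; omega
    · intro y x hxy hy
      simp only [Finset.coe_insert, Set.mem_insert_iff, Finset.mem_coe,
        YoungDiagram.mem_cells] at hy ⊢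
      rcases hy with rfl | hy
      · obtain ⟨a, b⟩ := x
        simp only [Prod.mk.injEq]
        have ha : a ≤ i := hxy.1
        have hb : b ≤ nu.rowLen i := hxy.2
        rcases Nat.lt_or_ge a i with h | h
        · right
          rw [YoungDiagram.mem_iff_lt_rowLen]
          have h1 : nu.rowLen (i - 1) ≤ nu.rowLen a := nu.rowLen_anti a (i - 1) (by omega)
          rcases hcond with h0 | h0
          · omega
          · omega
        · have : a = i := by omega
          subst this
          rcases Nat.lt_or_ge b (nu.rowLen a) with h' | h'
          · right; rw [YoungDiagram.mem_iff_lt_rowLen]; exact h'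
          · left; exact ⟨rfl, by omega⟩
      · exact Or.inr (nu.isLowerSet hxy hy)

lemma add_eq_image (nu : YoungDiagram) :
    add nu = (addRows nu).image (fun i => (i, nu.rowLen i)) := by
  ext c
  obtain ⟨i, j⟩ := c
  simp only [mem_add_iff_rowLen, Finset.mem_image, addRows, Finset.mem_filter,
    Finset.mem_range, Prod.mk.injEq]
  constructor
  · rintro ⟨rfl, hcond⟩
    refine ⟨i, ⟨?_, hcond⟩, rfl, rfl⟩
    rcases hcond with h0 | h0
    · omega
    · have := row_bound (nu := nu) (i := i - 1) (by omega)
      omega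
  · rintro ⟨i', ⟨hi', hcond⟩, rfl, rfl⟩
    exact ⟨rfl, hcond⟩

lemma addRows_eq (nu : YoungDiagram) :
    addRows nu = insert 0 ((remRows nu).image (· + 1)) := by
  ext i
  simp only [addRows, remRows, Finset.mem_insert, Finset.mem_image, Finset.mem_filter,
    Finset.mem_range]
  constructor
  · rintro ⟨hi, h0 | hlt⟩
    · exact Or.inl h0
    · rcases Nat.eq_zero_or_pos i with h0 | h0
      · exact Or.inl h0
      · refine Or.inr ⟨i - 1, ⟨by omega, ?_⟩, by omega⟩
        have : i - 1 + 1 = i := by omega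
        rw [this]; exact hlt
  · rintro (rfl | ⟨i', ⟨hi', hlt⟩, rfl⟩)
    · exact ⟨by omega, Or.inl rfl⟩
    · exact ⟨by omega, Or.inr (by simpa using hlt)⟩

lemma card_add_rem (nu : YoungDiagram) : (add nu).card = (rem nu).card + 1 := by
  rw [add_eq_image, rem_eq_image, addRows_eq,
    Finset.card_image_of_injective _ (fun a b h => by simpa using congrArg Prod.fst h),
    Finset.card_image_of_injective _ (fun a b h => by simpa using congrArg Prod.fst h),
    Finset.card_insert_of_notMem (by simp),
    Finset.card_image_of_injective _ (fun a b h => by omega)]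

lemma addCell_ne_bot {nu : YoungDiagram} {c : Nat × Nat} (hc : c ∈ add nu) : addCell nu c ≠ ⊥ :=
  ne_bot_of_mem ((mem_addCell hc).mpr (Or.inl rfl))

lemma rem_bot : rem ⊥ = ∅ := by
  rw [rem, YoungDiagram.cells_bot, Finset.filter_empty]

lemma card_bot : (⊥ : YoungDiagram).card = 0 := by
  rw [YoungDiagram.card, YoungDiagram.cells_bot, Finset.card_empty]

lemma sum_add_d : ∀ (n : Nat) (nu : YoungDiagram), nu.card = n →
    ∑ c ∈ add nu, d (addCell nu c) = (nu.card + 1) * d nu := by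
  intro n
  induction n using Nat.strong_induction_on with
  | _ n ih =>
  intro nu hnu
  have step1 : ∑ c ∈ add nu, d (addCell nu c)
      = ∑ c ∈ add nu,
          (d nu + ∑ b ∈ (rem (addCell nu c)).erase c, d (eraseCell (addCell nu c) b)) := by
    refine Finset.sum_congr rfl fun c hc => ?_
    rw [d_eq (addCell_ne_bot hc), ← Finset.add_sum_erase _ _ (rem_addCell hc),
      eraseCell_addCell hc]
  have step2 : ∑ c ∈ add nu, ∑ b ∈ (rem (addCell nu c)).erase c, d (eraseCell (addCell nu c) b)
      = ∑ b ∈ rem nu, ∑ c ∈ (add (eraseCell nu b)).erase b, d (addCell (eraseCell nu b) c) := by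
    rw [Finset.sum_sigma', Finset.sum_sigma']
    refine Finset.sum_bij' (fun x hx => ⟨x.2, x.1⟩) (fun x hx => ⟨x.2, x.1⟩) ?_ ?_ ?_ ?_ ?_
    · rintro ⟨c, b⟩ hx
      rw [Finset.mem_sigma, Finset.mem_erase] at hx
      obtain ⟨hc, hbne, hb⟩ := hx
      obtain ⟨h1, h2, -⟩ := swap_mem1 hc hb hbne
      rw [Finset.mem_sigma, Finset.mem_erase]
      refine ⟨h1, ?_, h2⟩
      show c ≠ b
      intro h
      exact (not_mem_of_mem_add hc)
        (mem_of_mem_rem (show c ∈ rem nu from h.symm ▸ h1))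
    · rintro ⟨b, c⟩ hx
      rw [Finset.mem_sigma, Finset.mem_erase] at hx
      obtain ⟨hb, hcne, hc⟩ := hx
      obtain ⟨h1, h2⟩ := swap_mem2 hb hc hcne
      rw [Finset.mem_sigma, Finset.mem_erase]
      exact ⟨h1, Ne.symm hcne, h2⟩
    · rintro ⟨c, b⟩ hx; rfl
    · rintro ⟨b, c⟩ hx; rfl
    · rintro ⟨c, b⟩ hx
      rw [Finset.mem_sigma, Finset.mem_erase] at hx
      obtain ⟨hc, hbne, hb⟩ := hx
      obtain ⟨-, -, h3⟩ := swap_mem1 hc hb hbne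
      rw [h3]
  have step3 : ∀ b ∈ rem nu,
      d nu + ∑ c ∈ (add (eraseCell nu b)).erase b, d (addCell (eraseCell nu b) c)
        = nu.card * d (eraseCell nu b) := by
    intro b hb
    have h1 : d nu + ∑ c ∈ (add (eraseCell nu b)).erase b, d (addCell (eraseCell nu b) c)
        = ∑ c ∈ add (eraseCell nu b), d (addCell (eraseCell nu b) c) := by
      rw [← Finset.add_sum_erase _ _ (add_eraseCell hb), addCell_eraseCell hb]
    rw [h1, ih ((eraseCell nu b).card) (by have := card_eraseCell hb; omega) _ rfl,
      card_eraseCell hb]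
  rw [step1, Finset.sum_add_distrib, Finset.sum_const, smul_eq_mul, step2]
  have hkey : (rem nu).card * d nu
        + ∑ b ∈ rem nu, ∑ c ∈ (add (eraseCell nu b)).erase b, d (addCell (eraseCell nu b) c)
      = nu.card * ∑ b ∈ rem nu, d (eraseCell nu b) := by
    calc (rem nu).card * d nu
          + ∑ b ∈ rem nu, ∑ c ∈ (add (eraseCell nu b)).erase b, d (addCell (eraseCell nu b) c)
        = ∑ b ∈ rem nu,
            (d nu + ∑ c ∈ (add (eraseCell nu b)).erase b, d (addCell (eraseCell nu b) c)) := by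
          rw [Finset.sum_add_distrib, Finset.sum_const, smul_eq_mul]
      _ = ∑ b ∈ rem nu, nu.card * d (eraseCell nu b) := Finset.sum_congr rfl step3
      _ = nu.card * ∑ b ∈ rem nu, d (eraseCell nu b) := (Finset.mul_sum _ _ _).symm
  by_cases hbot : nu = ⊥
  · subst hbot
    rw [rem_bot, Finset.sum_empty, card_add_rem, rem_bot, d_bot, card_bot]
    simp
  · have hkey' : (rem nu).card * d nu
        + ∑ b ∈ rem nu, ∑ c ∈ (add (eraseCell nu b)).erase b, d (addCell (eraseCell nu b) c)
        = nu.card * d nu := by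
      rw [hkey, ← d_eq hbot]
    rw [card_add_rem, add_one_mul, add_one_mul]
    linarith [hkey']


lemma rowLen_le_card (nu : YoungDiagram) (i : Nat) : nu.rowLen i ≤ nu.card := by
  rw [YoungDiagram.rowLen_eq_card]
  exact Finset.card_le_card (Finset.filter_subset _ _)

lemma card_eq_zero_iff_bot {mu : YoungDiagram} : mu.card = 0 ↔ mu = ⊥ := by
  constructor
  · intro h
    apply YoungDiagram.ext
    rw [YoungDiagram.cells_bot, ← Finset.card_eq_zero]
    exact h
  · rintro rfl; exact card_bot

noncomputable def toYD (s : Finset (Nat × Nat)) : YoungDiagram :=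
  if h : IsLowerSet (↑s : Set (Nat × Nat)) then ⟨s, h⟩ else ⊥

noncomputable def Fsz (m : Nat) : Finset YoungDiagram :=
  ((range m ×ˢ range m).powerset.filter
    fun (s : Finset (Nat × Nat)) => IsLowerSet (↑s : Set (Nat × Nat)) ∧ s.card = m).image toYD

lemma mem_Fsz {m : Nat} {mu : YoungDiagram} : mu ∈ Fsz m ↔ mu.card = m := by
  constructor
  · intro h
    rw [Fsz, Finset.mem_image] at h
    obtain ⟨s, hs, rfl⟩ := h
    rw [Finset.mem_filter] at hs
    rw [toYD, dif_pos hs.2.1]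
    exact hs.2.2
  · intro h
    rw [Fsz, Finset.mem_image]
    refine ⟨mu.cells, ?_, ?_⟩
    · rw [Finset.mem_filter, Finset.mem_powerset]
      refine ⟨?_, mu.isLowerSet, h⟩
      intro c hc
      obtain ⟨i, j⟩ := c
      rw [YoungDiagram.mem_cells] at hc
      have h1 : i < mu.colLen j := YoungDiagram.mem_iff_lt_colLen.mp hc
      have h2 : j < mu.rowLen i := YoungDiagram.mem_iff_lt_rowLen.mp hc
      have h3 := mu.colLen_anti 0 j (by omega)
      have h4 := colLen_le_card mu
      have h5 := rowLen_le_card mu i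
      simp only [Finset.mem_product, Finset.mem_range]
      omega
    · apply YoungDiagram.ext
      rw [toYD, dif_pos mu.isLowerSet]

lemma Fsz_zero : Fsz 0 = {⊥} := by
  ext mu
  rw [mem_Fsz, Finset.mem_singleton, card_eq_zero_iff_bot]

lemma sum_sq_succ (m : Nat) :
    ∑ mu ∈ Fsz (m + 1), d mu * d mu = (m + 1) * ∑ nu ∈ Fsz m, d nu * d nu := by
  have step1 : ∑ mu ∈ Fsz (m + 1), d mu * d mu
      = ∑ mu ∈ Fsz (m + 1), ∑ b ∈ rem mu, d (eraseCell mu b) * d mu := by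
    refine Finset.sum_congr rfl fun mu hmu => ?_
    have hne : mu ≠ ⊥ := by
      rw [mem_Fsz] at hmu
      intro h; rw [h, card_bot] at hmu; omega
    nth_rewrite 1 [d_eq hne]
    rw [Finset.sum_mul]
  have step2 : ∑ mu ∈ Fsz (m + 1), ∑ b ∈ rem mu, d (eraseCell mu b) * d mu
      = ∑ nu ∈ Fsz m, ∑ c ∈ add nu, d nu * d (addCell nu c) := by
    rw [Finset.sum_sigma', Finset.sum_sigma']
    refine Finset.sum_bij' (fun x hx => ⟨eraseCell x.1 x.2, x.2⟩)
      (fun x hx => ⟨addCell x.1 x.2, x.2⟩) ?_ ?_ ?_ ?_ ?_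
    · rintro ⟨mu, b⟩ hx
      rw [Finset.mem_sigma, mem_Fsz] at hx
      obtain ⟨hmu, hb⟩ := hx
      rw [Finset.mem_sigma, mem_Fsz]
      have h6 : (eraseCell mu b).card + 1 = mu.card := card_eraseCell hb
      have h7 : mu.card = m + 1 := hmu
      refine ⟨?_, ?_⟩
      · show (eraseCell mu b).card = m
        omega
      · exact add_eraseCell hb
    · rintro ⟨nu, c⟩ hx
      rw [Finset.mem_sigma, mem_Fsz] at hx
      obtain ⟨hnu, hc⟩ := hx
      rw [Finset.mem_sigma, mem_Fsz]
      have h6 : (addCell nu c).card = nu.card + 1 := card_addCell hc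
      have h7 : nu.card = m := hnu
      refine ⟨?_, ?_⟩
      · show (addCell nu c).card = m + 1
        omega
      · exact rem_addCell hc
    · rintro ⟨mu, b⟩ hx
      rw [Finset.mem_sigma] at hx
      show (⟨addCell (eraseCell mu b) b, b⟩ : Σ _ : YoungDiagram, Nat × Nat) = ⟨mu, b⟩
      rw [addCell_eraseCell hx.2]
    · rintro ⟨nu, c⟩ hx
      rw [Finset.mem_sigma] at hx
      show (⟨eraseCell (addCell nu c) c, c⟩ : Σ _ : YoungDiagram, Nat × Nat) = ⟨nu, c⟩
      rw [eraseCell_addCell hx.2]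
    · rintro ⟨mu, b⟩ hx
      rw [Finset.mem_sigma] at hx
      show d (eraseCell mu b) * d mu
          = d (eraseCell mu b) * d (addCell (eraseCell mu b) b)
      rw [addCell_eraseCell hx.2]
  have step3 : ∑ nu ∈ Fsz m, ∑ c ∈ add nu, d nu * d (addCell nu c)
      = ∑ nu ∈ Fsz m, (m + 1) * (d nu * d nu) := by
    refine Finset.sum_congr rfl fun nu hnu => ?_
    rw [mem_Fsz] at hnu
    rw [← Finset.mul_sum, sum_add_d nu.card nu rfl, hnu]
    ring
  rw [step1, step2, step3, ← Finset.mul_sum]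

lemma sum_sq_eq_factorial (n : Nat) :
    ∑ mu ∈ Fsz n, d mu * d mu = Nat.factorial n := by
  induction n with
  | zero => rw [Fsz_zero, Finset.sum_singleton, d_bot, Nat.factorial]
  | succ m ih => rw [sum_sq_succ, ih, Nat.factorial]


open scoped Classical

def SY (mu : YoungDiagram) : Type :=
  {f : mu.cells → Fin mu.card //
    Function.Bijective f ∧ ∀ c₁ c₂ : mu.cells,
      (c₁ : ℕ × ℕ).1 ≤ (c₂ : ℕ × ℕ).1 → (c₁ : ℕ × ℕ).2 ≤ (c₂ : ℕ × ℕ).2 → f c₁ ≤ f c₂}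

noncomputable instance (mu : YoungDiagram) : Fintype (SY mu) := by
  unfold SY; infer_instance

lemma card_pos_of_ne_bot {mu : YoungDiagram} (h : mu ≠ ⊥) : 0 < mu.card :=
  Nat.pos_of_ne_zero fun h0 => h (card_eq_zero_iff_bot.mp h0)

lemma rem_max {mu : YoungDiagram} {b : ℕ × ℕ} (hb : b ∈ rem mu) {y : ℕ × ℕ} (hy : y ∈ mu)
    (h1 : b.1 ≤ y.1) (h2 : b.2 ≤ y.2) : y = b := by
  obtain ⟨hbm, hn1, hn2⟩ := mem_rem.mp hb
  rcases lt_or_eq_of_le h1 with h | h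
  · exact absurd (mu.up_left_mem h h2 hy) hn1
  · rcases lt_or_eq_of_le h2 with h' | h'
    · exact absurd (mu.up_left_mem h1 h' hy) hn2
    · cases y; cases b; simp_all

noncomputable def topVal {mu : YoungDiagram} (hne : mu ≠ ⊥) (f : SY mu) : ℕ × ℕ :=
  ((Equiv.ofBijective f.1 f.2.1).symm ⟨mu.card - 1, by
    have := card_pos_of_ne_bot hne; omega⟩ : mu.cells).1

lemma topVal_spec {mu : YoungDiagram} (hne : mu ≠ ⊥) (f : SY mu) {x : mu.cells}
    (hx : (x : ℕ × ℕ) = topVal hne f) :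
    f.1 x = ⟨mu.card - 1, by have := card_pos_of_ne_bot hne; omega⟩ := by
  have hxx : x = (Equiv.ofBijective f.1 f.2.1).symm
      ⟨mu.card - 1, by have := card_pos_of_ne_bot hne; omega⟩ := Subtype.ext hx
  rw [hxx]
  exact (Equiv.ofBijective f.1 f.2.1).apply_symm_apply _

lemma topVal_mem {mu : YoungDiagram} (hne : mu ≠ ⊥) (f : SY mu) : topVal hne f ∈ mu := by
  rw [← YoungDiagram.mem_cells]
  exact ((Equiv.ofBijective f.1 f.2.1).symm _).2

lemma topVal_mem_rem {mu : YoungDiagram} (hne : mu ≠ ⊥) (f : SY mu) :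
    topVal hne f ∈ rem mu := by
  set c : mu.cells := (Equiv.ofBijective f.1 f.2.1).symm
    ⟨mu.card - 1, by have := card_pos_of_ne_bot hne; omega⟩ with hc
  have htv : topVal hne f = (c : ℕ × ℕ) := rfl
  have hfc : f.1 c = ⟨mu.card - 1, by have := card_pos_of_ne_bot hne; omega⟩ :=
    topVal_spec hne f rfl
  rw [mem_rem, htv]
  refine ⟨(YoungDiagram.mem_cells _).mp c.2, ?_, ?_⟩
  · intro hmem
    set x : mu.cells := ⟨((c : ℕ × ℕ).1 + 1, (c : ℕ × ℕ).2), (YoungDiagram.mem_cells _).mpr hmem⟩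
      with hx
    have hle : f.1 c ≤ f.1 x := f.2.2 c x (by rw [hx]; simp) (by rw [hx])
    have heq : f.1 x = f.1 c := by
      apply Fin.ext
      have h1 := (f.1 x).2
      have h2 : (f.1 c : ℕ) ≤ (f.1 x : ℕ) := hle
      rw [hfc] at h2 ⊢
      simp only at h2 ⊢
      omega
    have hxc : x = c := f.2.1.1 heq
    have := congrArg (fun z : mu.cells => (z : ℕ × ℕ).1) hxc
    rw [hx] at this
    simp at this
  · intro hmem
    set x : mu.cells := ⟨((c : ℕ × ℕ).1, (c : ℕ × ℕ).2 + 1), (YoungDiagram.mem_cells _).mpr hmem⟩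
      with hx
    have hle : f.1 c ≤ f.1 x := f.2.2 c x (by rw [hx]) (by rw [hx]; simp)
    have heq : f.1 x = f.1 c := by
      apply Fin.ext
      have h1 := (f.1 x).2
      have h2 : (f.1 c : ℕ) ≤ (f.1 x : ℕ) := hle
      rw [hfc] at h2 ⊢
      simp only at h2 ⊢
      omega
    have hxc : x = c := f.2.1.1 heq
    have := congrArg (fun z : mu.cells => (z : ℕ × ℕ).2) hxc
    rw [hx] at this
    simp at this

section Branch

variable {mu : YoungDiagram} {b : ℕ × ℕ}

lemma mem_cells_of_mem_eraseCell (hb : b ∈ rem mu) {x : ℕ × ℕ}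
    (hx : x ∈ (eraseCell mu b).cells) : x ∈ mu.cells := by
  rw [eraseCell_cells hb] at hx
  exact Finset.mem_of_mem_erase hx

lemma ne_b_of_mem_eraseCell (hb : b ∈ rem mu) {x : ℕ × ℕ}
    (hx : x ∈ (eraseCell mu b).cells) : x ≠ b := by
  rw [eraseCell_cells hb] at hx
  exact Finset.ne_of_mem_erase hx

noncomputable def resT (hne : mu ≠ ⊥) (hb : b ∈ rem mu) (f : SY mu)
    (hf : topVal hne f = b) : SY (eraseCell mu b) := by
  have hcard := card_eraseCell hb
  refine ⟨fun x => ⟨(f.1 ⟨(x : ℕ × ℕ), mem_cells_of_mem_eraseCell hb x.2⟩ : Fin mu.card), ?_⟩,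
    ?_, ?_⟩
  · -- bound
    have h1 := (f.1 ⟨(x : ℕ × ℕ), mem_cells_of_mem_eraseCell hb x.2⟩).2
    rcases Nat.lt_or_ge ((f.1 ⟨(x : ℕ × ℕ), mem_cells_of_mem_eraseCell hb x.2⟩ : Fin mu.card) : ℕ)
      ((eraseCell mu b).card) with h | h
    · exact h
    · exfalso
      have heq : f.1 ⟨(x : ℕ × ℕ), mem_cells_of_mem_eraseCell hb x.2⟩
          = ⟨mu.card - 1, by have := card_pos_of_ne_bot hne; omega⟩ := by
        apply Fin.ext
        simp only [Fin.val_mk]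
        omega
      have h4 : f.1 ⟨(x : ℕ × ℕ), mem_cells_of_mem_eraseCell hb x.2⟩
          = f.1 ((Equiv.ofBijective f.1 f.2.1).symm
              ⟨mu.card - 1, by have := card_pos_of_ne_bot hne; omega⟩) := by
        exact heq.trans (topVal_spec hne f rfl).symm
      have h5 := f.2.1.1 h4
      have h6 : (x : ℕ × ℕ) = topVal hne f :=
        congrArg (fun z : mu.cells => (z : ℕ × ℕ)) h5
      exact ne_b_of_mem_eraseCell hb x.2 (h6.trans hf)
  · -- bijective
    rw [Fintype.bijective_iff_injective_and_card]
    constructor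
    · intro a a' h
      beta_reduce at h
      have h2 : f.1 ⟨(a : ℕ × ℕ), mem_cells_of_mem_eraseCell hb a.2⟩
          = f.1 ⟨(a' : ℕ × ℕ), mem_cells_of_mem_eraseCell hb a'.2⟩ := by
        apply Fin.ext
        have h3 := congrArg Fin.val h
        simpa using h3
      have := f.2.1.1 h2
      exact Subtype.ext (congrArg (fun z : mu.cells => (z : ℕ × ℕ)) this)
    · simp [Fintype.card_coe]
  · -- monotone
    intro c₁ c₂ h1 h2
    exact f.2.2 _ _ h1 h2

noncomputable def extT (hne : mu ≠ ⊥) (hb : b ∈ rem mu) (g : SY (eraseCell mu b)) : SY mu := by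
  have hcard := card_eraseCell hb
  refine ⟨fun x => if hxb : (x : ℕ × ℕ) = b
      then ⟨(eraseCell mu b).card, by omega⟩
      else ⟨(g.1 ⟨(x : ℕ × ℕ), by
        rw [eraseCell_cells hb]; exact Finset.mem_erase.mpr ⟨hxb, x.2⟩⟩ : Fin _), by
        have := (g.1 ⟨(x : ℕ × ℕ), by
          rw [eraseCell_cells hb]; exact Finset.mem_erase.mpr ⟨hxb, x.2⟩⟩).2
        omega⟩,
    ?_, ?_⟩
  · rw [Fintype.bijective_iff_injective_and_card]
    constructor
    · intro a a' h
      beta_reduce at h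
      by_cases ha : (a : ℕ × ℕ) = b <;> by_cases ha' : (a' : ℕ × ℕ) = b
      · exact Subtype.ext (ha.trans ha'.symm)
      · exfalso
        rw [dif_pos ha, dif_neg ha'] at h
        have := congrArg Fin.val h
        simp only at this
        have := (g.1 ⟨(a' : ℕ × ℕ), by
          rw [eraseCell_cells hb]; exact Finset.mem_erase.mpr ⟨ha', a'.2⟩⟩).2
        omega
      · exfalso
        rw [dif_neg ha, dif_pos ha'] at h
        have := congrArg Fin.val h
        simp only at this
        have := (g.1 ⟨(a : ℕ × ℕ), by
          rw [eraseCell_cells hb]; exact Finset.mem_erase.mpr ⟨ha, a.2⟩⟩).2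
        omega
      · rw [dif_neg ha, dif_neg ha'] at h
        have h2 : g.1 ⟨(a : ℕ × ℕ), by
              rw [eraseCell_cells hb]; exact Finset.mem_erase.mpr ⟨ha, a.2⟩⟩
            = g.1 ⟨(a' : ℕ × ℕ), by
              rw [eraseCell_cells hb]; exact Finset.mem_erase.mpr ⟨ha', a'.2⟩⟩ := by
          apply Fin.ext
          have h3 := congrArg Fin.val h
          simpa using h3
        have := g.2.1.1 h2
        exact Subtype.ext (congrArg (fun z : (eraseCell mu b).cells => (z : ℕ × ℕ)) this)
    · simp [Fintype.card_coe]
  · intro c₁ c₂ h1 h2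
    beta_reduce
    by_cases hc2 : (c₂ : ℕ × ℕ) = b
    · rw [dif_pos hc2]
      by_cases hc1 : (c₁ : ℕ × ℕ) = b
      · rw [dif_pos hc1]
      · rw [dif_neg hc1]
        have := (g.1 ⟨(c₁ : ℕ × ℕ), by
          rw [eraseCell_cells hb]; exact Finset.mem_erase.mpr ⟨hc1, c₁.2⟩⟩).2
        exact Fin.mk_le_mk.mpr (by omega)
    · by_cases hc1 : (c₁ : ℕ × ℕ) = b
      · exfalso
        have hyb : (c₂ : ℕ × ℕ) = b :=
          rem_max hb ((YoungDiagram.mem_cells _).mp c₂.2) (hc1 ▸ h1) (hc1 ▸ h2)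
        exact hc2 hyb
      · rw [dif_neg hc1, dif_neg hc2]
        exact Fin.mk_le_mk.mpr (g.2.2 _ _ h1 h2)

lemma topVal_extT (hne : mu ≠ ⊥) (hb : b ∈ rem mu) (g : SY (eraseCell mu b)) :
    topVal hne (extT hne hb g) = b := by
  have hcard := card_eraseCell hb
  have hbm : b ∈ mu.cells := (YoungDiagram.mem_cells _).mpr (mem_of_mem_rem hb)
  have : (extT hne hb g).1 ⟨b, hbm⟩ = ⟨mu.card - 1, by have := card_pos_of_ne_bot hne; omega⟩ := by
    show (if hxb : ((⟨b, hbm⟩ : mu.cells) : ℕ × ℕ) = b then _ else _) = _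
    rw [dif_pos rfl]
    exact Fin.ext (by simp only; omega)
  have h2 : (⟨b, hbm⟩ : mu.cells)
      = (Equiv.ofBijective (extT hne hb g).1 (extT hne hb g).2.1).symm
        ⟨mu.card - 1, by have := card_pos_of_ne_bot hne; omega⟩ :=
    (Equiv.eq_symm_apply _).mpr this
  rw [topVal, ← h2]

lemma fiber_card (hne : mu ≠ ⊥) (hb : b ∈ rem mu) :
    ((univ : Finset (SY mu)).filter fun f => topVal hne f = b).card
      = Fintype.card (SY (eraseCell mu b)) := by
  have hcard := card_eraseCell hb
  rw [← Finset.card_univ]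
  refine Finset.card_bij' (fun f hf => resT hne hb f (Finset.mem_filter.mp hf).2)
    (fun g _ => extT hne hb g) (fun _ _ => Finset.mem_univ _)
    (fun g hg => Finset.mem_filter.mpr ⟨Finset.mem_univ _, topVal_extT hne hb g⟩) ?_ ?_
  · -- extT (resT f) = f
    intro f hf
    apply Subtype.ext
    funext x
    apply Fin.ext
    show ((if hxb : (x : ℕ × ℕ) = b then _ else _ : Fin mu.card) : ℕ) = _
    by_cases hxb : (x : ℕ × ℕ) = b
    · rw [dif_pos hxb,
        topVal_spec hne f (x := x) (hxb.trans (Finset.mem_filter.mp hf).2.symm)]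
      simp only [Fin.val_mk]
      omega
    · rw [dif_neg hxb]
      rfl
  · -- resT (extT g) = g
    intro g hg
    apply Subtype.ext
    funext x
    apply Fin.ext
    have hxb : (x : ℕ × ℕ) ≠ b := ne_b_of_mem_eraseCell hb x.2
    show (((extT hne hb g).1 ⟨(x : ℕ × ℕ), _⟩ : Fin mu.card) : ℕ) = _
    show ((if h : ((⟨(x : ℕ × ℕ), mem_cells_of_mem_eraseCell hb x.2⟩ : mu.cells) : ℕ × ℕ) = b
        then _ else _ : Fin mu.card) : ℕ) = _
    rw [dif_neg hxb]

end Branch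

lemma sytCard_eq_SY (mu : YoungDiagram) : sytCard mu = Fintype.card (SY mu) := rfl

lemma sytCard_bot : sytCard ⊥ = 1 := by
  rw [sytCard_eq_SY]
  haveI h1 : IsEmpty ((⊥ : YoungDiagram).cells) :=
    ⟨fun x => YoungDiagram.notMem_bot x.1 ((YoungDiagram.mem_cells _).mp x.2)⟩
  haveI h2 : IsEmpty (Fin ((⊥ : YoungDiagram).card)) := by
    have : (⊥ : YoungDiagram).card = 0 := card_bot
    rw [this]
    infer_instance
  apply Fintype.card_eq_one_iff.mpr
  refine ⟨⟨fun x => h1.elim x, ⟨fun a => h1.elim a, fun v => h2.elim v⟩, fun c => h1.elim c⟩, ?_⟩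
  rintro ⟨g, -⟩
  apply Subtype.ext
  funext x
  exact h1.elim x

lemma sytCard_branch {mu : YoungDiagram} (hne : mu ≠ ⊥) :
    sytCard mu = ∑ b ∈ rem mu, sytCard (eraseCell mu b) := by
  rw [sytCard_eq_SY, ← Finset.card_univ,
    Finset.card_eq_sum_card_fiberwise (f := topVal hne) (t := rem mu)
      (fun f _ => topVal_mem_rem hne f)]
  refine Finset.sum_congr rfl fun b hb => ?_
  rw [sytCard_eq_SY (eraseCell mu b), fiber_card hne hb]

lemma sytCard_eq_d : ∀ (n : ℕ) (mu : YoungDiagram), mu.card = n → sytCard mu = d mu := by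
  intro n
  induction n using Nat.strong_induction_on with
  | _ n ih =>
  intro mu hmu
  by_cases hne : mu = ⊥
  · subst hne; rw [sytCard_bot, d_bot]
  · rw [sytCard_branch hne, d_eq hne]
    refine Finset.sum_congr rfl fun b hb => ?_
    have h6 : (eraseCell mu b).card + 1 = mu.card := card_eraseCell hb
    have h7 := card_pos_of_ne_bot hne
    exact ih ((eraseCell mu b).card) (by omega) _ rfl

end SYTAux

/-- For every `n ≥ 1`, the sum over all Young diagrams of size `n` of the square of the
number of standard Young tableaux of that shape equals `n!`. -/
theorem sum_sq_dim_eq_factorial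
    (n : ℕ) (hn : 1 ≤ n) (F : Finset YoungDiagram) (hF : ∀ μ, μ ∈ F ↔ μ.card = n) :
    ∑ μ ∈ F, (sytCard μ) ^ 2 = Nat.factorial n := by
  have hF' : F = SYTAux.Fsz n := Finset.ext fun μ => by rw [hF, SYTAux.mem_Fsz]
  rw [hF']
  have hc : ∀ μ ∈ SYTAux.Fsz n, sytCard μ ^ 2 = SYTAux.d μ * SYTAux.d μ := fun μ _ => by
    rw [SYTAux.sytCard_eq_d μ.card μ rfl, sq]
  rw [Finset.sum_congr rfl hc, SYTAux.sum_sq_eq_factorial]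
end
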